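/- arXiv:1905.12161 — 6 statements merged into one kernel-verified Lean document; each statement's English description precedes it below -/
import Mathlib

section
/- Let G be a finite multigraph and c ≥ 2 an integer. Among all spanning subgraphs of G obtained by partitioning V(G) into c parts and keeping exactly the edges joining different parts, choose one, H, with the maximum number of edges. Then for every vertex subset X of V(G), the number of edges of H with exactly one end in X is at least ((c-1)/c) times the number of edges of G with exactly one end in X. -/
open Finset

namespace Paper

variable {V : Type*} [Fintype V] [DecidableEq V]

/-- Bool test: the edge `e` has exactly one end in `X`. -/
def crossB (X : Finset V) : Sym2 V → Bool :=
  Sym2.lift ⟨fun a b => xor (decide (a ∈ X)) (decide (b ∈ X)), by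
    intro a b; simp [Bool.xor_comm]⟩

/-- Bool test: both ends of the edge `e` lie in `X`. -/
def bothB (X : Finset V) : Sym2 V → Bool :=
  Sym2.lift ⟨fun a b => decide (a ∈ X) && decide (b ∈ X), by
    intro a b; simp [Bool.and_comm]⟩

/-- A finite multigraph on vertex set `V`: a multiset of loopless edges. -/
structure MGraph (V : Type*) where
  edges : Multiset (Sym2 V)
  loopless : ∀ e ∈ edges, ¬ e.IsDiag

/-- Number of edges of the edge multiset `E` with exactly one end in `X`. -/
def cutE (E : Multiset (Sym2 V)) (X : Finset V) : ℕ :=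
  (E.filter (fun e => crossB X e = true)).card

/-- `d_G(X)`: number of edges of `G` with exactly one end in `X`. -/
def cut (G : MGraph V) (X : Finset V) : ℕ := cutE G.edges X

/-- Degree of a vertex in a multigraph. -/
def deg (G : MGraph V) (v : V) : ℕ := cut G {v}

/-- Number of edges of `E` with both ends in `S`. -/
def insideE (E : Multiset (Sym2 V)) (S : Finset V) : ℕ :=
  (E.filter (fun e => bothB S e = true)).card

/-- `P` is a partition of the vertex set `W` into nonempty parts. -/
def IsPartitionOf (W : Finset V) (P : Finset (Finset V)) : Prop :=
  (∀ A ∈ P, A.Nonempty) ∧ (∀ A ∈ P, ∀ B ∈ P, A ≠ B → Disjoint A B) ∧ P.sup id = W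

/-- Number of edges of `E` joining different parts of `P`. -/
def ePart (E : Multiset (Sym2 V)) (P : Finset (Finset V)) : ℕ :=
  (E.filter (fun e => decide (∀ A ∈ P, bothB A e = false) = true)).card

/-- The edge multiset `E`, restricted to the vertex set `W`, is `l`-partition-connected:
for every partition `P` of `W`, the number of edges (inside `W`) joining different parts
is at least `Σ_{A∈P} l(A) − l(W)`. -/
def LPCOn (E : Multiset (Sym2 V)) (W : Finset V) (l : Finset V → ℝ) : Prop :=
  ∀ P : Finset (Finset V), IsPartitionOf W P →
    (ePart (E.filter (fun e => bothB W e = true)) P : ℝ) ≥ (∑ A ∈ P, l A) - l W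

/-- The multigraph `G` is `l`-partition-connected. -/
def LPC (G : MGraph V) (l : Finset V → ℝ) : Prop := LPCOn G.edges Finset.univ l

/-- `t`-partition-connectivity (constant function `t`). -/
def PC (G : MGraph V) (t : ℝ) : Prop := LPC G (fun _ => t)

/-- `m`-tree-connectivity, via the Nash-Williams–Tutte theorem identified with
`m`-partition-connectivity. -/
def TreeConn (m : ℕ) (G : MGraph V) : Prop := PC G (m : ℝ)

/-- `G` is properly `c`-colorable. -/
def MColorable (c : ℕ) (G : MGraph V) : Prop :=
  ∃ f : V → Fin c, ∀ a b : V, s(a, b) ∈ G.edges → f a ≠ f b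

/-- `G` is bipartite. -/
def MBipartite (G : MGraph V) : Prop := MColorable 2 G

/-- `P` is the partition of `W` into the (vertex sets of the) `l`-partition-connected
components of the graph with edge multiset `E` restricted to `W`: each part induces an
`l`-partition-connected subgraph, and every set inducing an `l`-partition-connected
subgraph lies inside one part. -/
def IsLPCComponents (E : Multiset (Sym2 V)) (W : Finset V) (l : Finset V → ℝ)
    (P : Finset (Finset V)) : Prop :=
  IsPartitionOf W P ∧ (∀ A ∈ P, LPCOn E A l) ∧
    ∀ B ⊆ W, B.Nonempty → LPCOn E B l → ∃ A ∈ P, B ⊆ A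

/-- `Θ_l` computed with respect to the component partition `P` of `W`. -/
noncomputable def ThetaVal (E : Multiset (Sym2 V)) (W : Finset V) (l : Finset V → ℝ)
    (P : Finset (Finset V)) : ℝ :=
  (∑ A ∈ P, l A) - (ePart (E.filter (fun e => bothB W e = true)) P : ℝ)

/-- Intersecting supermodular set function. -/
def IntersectingSupermodular (l : Finset V → ℝ) : Prop :=
  ∀ A B : Finset V, (A ∩ B).Nonempty → l (A ∩ B) + l (A ∪ B) ≥ l A + l B

/-- Nonincreasing set function. -/
def Nonincreasing (l : Finset V → ℝ) : Prop :=
  ∀ A B : Finset V, A.Nonempty → A ⊆ B → l A ≥ l B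

/-- Edge multiset of a simple graph. -/
noncomputable def SGedges (G : SimpleGraph V) : Multiset (Sym2 V) :=
  (Set.toFinite G.edgeSet).toFinset.val

/-- `m`-tree-connectivity of a simple graph, via partition-connectivity. -/
noncomputable def TreeConnSG (m : ℕ) (G : SimpleGraph V) : Prop :=
  LPCOn (SGedges G) Finset.univ (fun _ => (m : ℝ))

/-- Degree in a simple graph. -/
noncomputable def degSG (G : SimpleGraph V) (v : V) : ℕ := Nat.card (G.neighborSet v)

/-- `G` is `t`-tough. -/
def Tough (t : ℝ) (G : SimpleGraph V) : Prop :=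
  ∀ S : Finset V,
    (Nat.card ((G.induce ((↑S : Set V)ᶜ)).ConnectedComponent) : ℝ) ≤
      max 1 ((S.card : ℝ) / t)

/-- Bool test: the two ends of `e` receive different values under `f`. -/
def diffB {c : ℕ} (f : V → Fin c) : Sym2 V → Bool :=
  Sym2.lift ⟨fun a b => decide (f a ≠ f b), by
    intro a b; simp [ne_comm]⟩

end Paper

open Paper

private lemma sum_card_filter' {α : Type*} {c : ℕ} (s : Multiset α) (p : Fin c → α → Bool) :
    ∑ k : Fin c, (s.filter (fun e => p k e = true)).card
      = (s.map (fun e => ((Finset.univ.filter (fun k : Fin c => p k e = true)).card))).sum := by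
  induction s using Multiset.induction with
  | empty => simp
  | cons a s ih =>
    simp only [Multiset.filter_cons, Multiset.map_cons, Multiset.sum_cons]
    have h1 : ∀ k : Fin c,
        ((if p k a = true then {a} else 0 : Multiset α)
          + s.filter (fun e => p k e = true)).card
        = (if p k a = true then 1 else 0) + (s.filter (fun e => p k e = true)).card := by
      intro k; rcases h : p k a <;> simp [h, Nat.add_comm]
    simp_rw [h1]
    rw [Finset.sum_add_distrib, ih, Finset.sum_boole]
    simp

theorem stmt0 {V : Type*} [Fintype V] [DecidableEq V] (G : MGraph V) (c : ℕ) (hc : 2 ≤ c)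
    (f : V → Fin c)
    (hmax : ∀ g : V → Fin c,
      (G.edges.filter (fun e => diffB g e = true)).card ≤
        (G.edges.filter (fun e => diffB f e = true)).card) :
    ∀ X : Finset V,
      c * cutE (G.edges.filter (fun e => diffB f e = true)) X ≥ (c - 1) * cut G X := by
  intro X
  haveI : NeZero c := ⟨by omega⟩
  set E := G.edges with hE
  set g : Fin c → V → Fin c := fun k v => if v ∈ X then f v + k else f v with hg
  have hnc : ∀ (k : Fin c) (e : Sym2 V), crossB X e = false → diffB (g k) e = diffB f e := by
    intro k e
    induction e using Sym2.ind with
    | _ a b =>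
      intro he
      simp only [crossB, Sym2.lift_mk] at he
      by_cases ha : a ∈ X <;> by_cases hb : b ∈ X <;>
        simp [ha, hb, diffB, hg, add_left_inj] at he ⊢
  have hcc : ∀ e : Sym2 V, crossB X e = true →
      (Finset.univ.filter (fun k : Fin c => diffB (g k) e = true)).card = c - 1 := by
    intro e
    induction e using Sym2.ind with
    | _ a b =>
      intro he
      simp only [crossB, Sym2.lift_mk] at he
      by_cases ha : a ∈ X <;> by_cases hb : b ∈ X <;>
        simp [ha, hb, diffB, hg] at he ⊢
      · have h2 : (Finset.univ.filter (fun k : Fin c => ¬ f a + k = f b))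
            = Finset.univ.erase (f b - f a) := by
          ext k
          simp only [Finset.mem_filter, Finset.mem_erase, Finset.mem_univ, true_and,
            and_true]
          exact not_congr eq_sub_iff_add_eq'.symm
        rw [h2, Finset.card_erase_of_mem (Finset.mem_univ _), Finset.card_univ,
          Fintype.card_fin]
      · have h2 : (Finset.univ.filter (fun k : Fin c => ¬ f a = f b + k))
            = Finset.univ.erase (f a - f b) := by
          ext k
          simp only [Finset.mem_filter, Finset.mem_erase, Finset.mem_univ, true_and,
            and_true]
          constructor
          · intro h h'; exact h (by rw [h']; abel)
          · intro h h'; exact h (by rw [h']; abel)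
        rw [h2, Finset.card_erase_of_mem (Finset.mem_univ _), Finset.card_univ,
          Fintype.card_fin]
  set S := E.filter (fun e => crossB X e = true) with hSdef
  set N := E.filter (fun e => crossB X e = false) with hNdef
  have hsplit : ∀ h : V → Fin c, (E.filter (fun e => diffB h e = true)).card
      = (S.filter (fun e => diffB h e = true)).card
        + (N.filter (fun e => diffB h e = true)).card := by
    intro h
    have hadd : S + N = E := by
      rw [hSdef, hNdef]
      have := Multiset.filter_add_not (fun e => crossB X e = true) E
      simpa [Bool.not_eq_true] using this
    conv_lhs => rw [← hadd]
    rw [Multiset.filter_add, Multiset.card_add]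
  have hNc : ∀ k : Fin c, (N.filter (fun e => diffB (g k) e = true)).card
      = (N.filter (fun e => diffB f e = true)).card := by
    intro k
    congr 1
    apply Multiset.filter_congr
    intro e he
    rw [hNdef, Multiset.mem_filter] at he
    rw [hnc k e he.2]
  have hle : ∀ k : Fin c, (S.filter (fun e => diffB (g k) e = true)).card
      ≤ (S.filter (fun e => diffB f e = true)).card := by
    intro k
    have h1 := hmax (g k)
    rw [hsplit (g k), hsplit f, hNc k] at h1
    omega
  have hsum : ∑ k : Fin c, (S.filter (fun e => diffB (g k) e = true)).card
      = (c - 1) * S.card := by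
    rw [sum_card_filter' S (fun k e => diffB (g k) e)]
    have hmc : S.map (fun e => (Finset.univ.filter
          (fun k : Fin c => diffB (g k) e = true)).card)
        = S.map (fun _ => c - 1) :=
      Multiset.map_congr rfl (fun e he => hcc e (Multiset.mem_filter.mp he).2)
    rw [hmc, Multiset.map_const', Multiset.sum_replicate, smul_eq_mul, mul_comm]
  have hScut : S.card = cut G X := rfl
  have hcutE : cutE (E.filter (fun e => diffB f e = true)) X
      = (S.filter (fun e => diffB f e = true)).card := by
    rw [cutE, hSdef, Multiset.filter_comm]
  have hchain : (c - 1) * cut G X ≤ c * cutE (E.filter (fun e => diffB f e = true)) X := by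
    rw [← hScut, ← hsum, hcutE]
    calc ∑ k : Fin c, (S.filter (fun e => diffB (g k) e = true)).card
        ≤ ∑ _k : Fin c, (S.filter (fun e => diffB f e = true)).card :=
          Finset.sum_le_sum (fun k _ => hle k)
      _ = c * (S.filter (fun e => diffB f e = true)).card := by
          rw [Finset.sum_const, Finset.card_univ, Fintype.card_fin, smul_eq_mul]
  exact hchain
end

section
/- Every finite graph G contains a spanning subgraph H with chromatic number at most c such that for every vertex subset X, d_H(X) ≥ ((c-1)/c)·d_G(X), where c ≥ 2 is any given integer. -/
open Finset

open Paper

section StmtAux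
variable {α : Type*}

lemma countP_splitB (r q : α → Bool) (s : Multiset α) :
    Multiset.countP (fun e => q e = true) s =
      Multiset.countP (fun e => (r e && q e) = true) s +
      Multiset.countP (fun e => (!r e && q e) = true) s := by
  induction s using Multiset.induction_on with
  | empty => simp
  | cons a s ih =>
    simp only [Multiset.countP_cons, ih]
    cases hr : r a <;> cases hq : q a <;> simp [hr, hq] <;> omega

lemma sum_countPB {c : ℕ} (p : Fin c → α → Bool) (r : α → Bool)
    (hN : ∀ e, (Finset.univ.filter (fun k => p k e = true)).card =
      (if r e = true then 1 else 0)) (s : Multiset α) :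
    ∑ k : Fin c, Multiset.countP (fun e => p k e = true) s =
      Multiset.countP (fun e => r e = true) s := by
  induction s using Multiset.induction_on with
  | empty => simp
  | cons a s ih =>
    simp only [Multiset.countP_cons, Finset.sum_add_distrib, ih]
    congr 1
    rw [← hN a, Finset.card_filter]

end StmtAux

theorem stmt1 {V : Type*} [Fintype V] [DecidableEq V] (G : SimpleGraph V) (c : ℕ)
    (hc : 2 ≤ c) :
    ∃ H : SimpleGraph V, H ≤ G ∧ H.Colorable c ∧
      ∀ X : Finset V, c * cutE (SGedges H) X ≥ (c - 1) * cutE (SGedges G) X := by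
  classical
  haveI : NeZero c := ⟨by omega⟩
  set Eg : Multiset (Sym2 V) := SGedges G with hEgdef
  set mono : (V → Fin c) → ℕ := fun g =>
    Multiset.countP (fun e => (!diffB g e) = true) Eg with hmono
  obtain ⟨f, -, hf⟩ := Finset.exists_min_image (Finset.univ : Finset (V → Fin c)) mono
    ⟨(fun _ => 0), Finset.mem_univ _⟩
  let H : SimpleGraph V :=
    { Adj := fun u v => G.Adj u v ∧ f u ≠ f v,
      symm := ⟨fun u v h => ⟨h.1.symm, Ne.symm h.2⟩⟩,
      loopless := ⟨fun v h => h.2 rfl⟩ }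
  have memSG : ∀ (K : SimpleGraph V) (e : Sym2 V), e ∈ SGedges K ↔ e ∈ K.edgeSet := by
    intro K e
    simp only [SGedges, Finset.mem_val, Set.Finite.mem_toFinset]
  have hE : SGedges H = Eg.filter (fun e => diffB f e = true) := by
    refine (Multiset.Nodup.ext ?_ ?_).mpr ?_
    · exact (Set.toFinite H.edgeSet).toFinset.nodup
    · exact Multiset.Nodup.filter _ ((Set.toFinite G.edgeSet).toFinset.nodup)
    · intro e
      rw [Multiset.mem_filter, memSG, hEgdef, memSG]
      induction e using Sym2.ind with
      | _ a b =>
        simp only [SimpleGraph.mem_edgeSet, diffB, Sym2.lift_mk, decide_eq_true_iff]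
        exact Iff.rfl
  refine ⟨H, fun u v h => h.1, ⟨SimpleGraph.Coloring.mk f (fun h => h.2)⟩, ?_⟩
  intro X
  set b := Multiset.countP (fun e => (diffB f e && crossB X e) = true) Eg with hb
  set m := Multiset.countP (fun e => (!diffB f e && crossB X e) = true) Eg with hm
  set d := Multiset.countP (fun e => crossB X e = true) Eg with hd
  have hcutG : cutE Eg X = d := (Multiset.countP_eq_card_filter _ _).symm
  have hcutH : cutE (SGedges H) X = b := by
    rw [hE]
    unfold cutE
    rw [Multiset.filter_filter, hb, ← Multiset.countP_eq_card_filter]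
    refine Multiset.countP_congr rfl ?_
    intro e _
    simp only [eq_iff_iff, Bool.and_eq_true]
    exact ⟨fun h => ⟨h.2, h.1⟩, fun h => ⟨h.2, h.1⟩⟩
  have hsplit : d = b + m := countP_splitB (diffB f) (crossB X) Eg
  set g : Fin c → V → Fin c := fun k v => if v ∈ X then f v + k else f v with hg
  -- noncrossing edges keep their mono/bi status under recoloring
  have hnc : ∀ k : Fin c,
      Multiset.countP (fun e => (!crossB X e && !diffB (g k) e) = true) Eg =
      Multiset.countP (fun e => (!crossB X e && !diffB f e) = true) Eg := by
    intro k
    refine Multiset.countP_congr rfl ?_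
    intro e _
    induction e using Sym2.ind with
    | _ a b =>
      by_cases ha : a ∈ X <;> by_cases hb' : b ∈ X <;>
        simp [crossB, diffB, hg, ha, hb']
  -- minimality: m ≤ m_k for each shift k
  have hmk : ∀ k : Fin c,
      m ≤ Multiset.countP (fun e => (crossB X e && !diffB (g k) e) = true) Eg := by
    intro k
    have h1 := hf (g k) (Finset.mem_univ _)
    simp only [hmono] at h1
    have e1 := countP_splitB (crossB X) (fun e => !diffB f e) Eg
    have e2 := countP_splitB (crossB X) (fun e => !diffB (g k) e) Eg
    rw [hnc k] at e2
    have hmm : m = Multiset.countP (fun e => (crossB X e && !diffB f e) = true) Eg := by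
      rw [hm]
      refine Multiset.countP_congr rfl ?_
      intro e _
      simp only [eq_iff_iff, Bool.and_eq_true]
      exact ⟨fun h => ⟨h.2, h.1⟩, fun h => ⟨h.2, h.1⟩⟩
    omega
  -- the shifts partition the crossing edges: ∑_k m_k = d
  have hsum : ∑ k : Fin c,
      Multiset.countP (fun e => (crossB X e && !diffB (g k) e) = true) Eg = d := by
    rw [hd]
    refine sum_countPB (fun k e => crossB X e && !diffB (g k) e) (crossB X) ?_ Eg
    intro e
    induction e using Sym2.ind with
    | _ a b =>
      by_cases ha : a ∈ X <;> by_cases hb' : b ∈ X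
      · simp [crossB, ha, hb']
      · -- a ∈ X, b ∉ X : exactly one shift makes the edge monochromatic
        have hcr : crossB X s(a, b) = true := by simp [crossB, ha, hb']
        rw [if_pos hcr]
        have hiff : ∀ k : Fin c,
            ((crossB X s(a, b) && !diffB (g k) s(a, b)) = true) ↔ k = f b - f a := by
          intro k
          rw [hcr, Bool.true_and]
          simp only [diffB, Sym2.lift_mk, hg, if_pos ha, if_neg hb',
            Bool.not_eq_true', decide_eq_false_iff_not, not_not]
          rw [eq_sub_iff_add_eq, add_comm k (f a)]
        rw [Finset.filter_congr (fun k _ => hiff k), Finset.filter_eq',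
          if_pos (Finset.mem_univ _)]
        simp
      · -- b ∈ X, a ∉ X
        have hcr : crossB X s(a, b) = true := by simp [crossB, ha, hb']
        rw [if_pos hcr]
        have hiff : ∀ k : Fin c,
            ((crossB X s(a, b) && !diffB (g k) s(a, b)) = true) ↔ k = f a - f b := by
          intro k
          rw [hcr, Bool.true_and]
          simp only [diffB, Sym2.lift_mk, hg, if_pos hb', if_neg ha,
            Bool.not_eq_true', decide_eq_false_iff_not, not_not]
          rw [eq_comm, eq_sub_iff_add_eq, add_comm k (f b), eq_comm]
        rw [Finset.filter_congr (fun k _ => hiff k), Finset.filter_eq',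
          if_pos (Finset.mem_univ _)]
        simp
      · simp [crossB, ha, hb']
  have hcm : c * m ≤ d := by
    calc c * m = ∑ _k : Fin c, m := by simp [Finset.sum_const, mul_comm]
    _ ≤ _ := Finset.sum_le_sum (fun k _ => hmk k)
    _ = d := hsum
  rw [hcutG, hcutH, ge_iff_le]
  have h2 : c * d = c * b + c * m := by rw [hsplit, mul_add]
  calc (c - 1) * d = c * d - d := by rw [Nat.sub_mul, one_mul]
  _ ≤ c * d - c * m := Nat.sub_le_sub_left hcm _
  _ = c * b := by omega
end

section
/- Every finite graph G contains a bipartite spanning subgraph H such that for every vertex subset X of V(G), the number of edges of H leaving X is at least half the number of edges of G leaving X. In particular, every vertex v satisfies d_H(v) ≥ d_G(v)/2. -/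
open Finset

open Paper

section Stmt2Aux

variable {V : Type*} [Fintype V] [DecidableEq V]

private def dB2 (f : V → Bool) : Sym2 V → Bool :=
  Sym2.lift ⟨fun a b => xor (f a) (f b), by intro a b; simp [Bool.xor_comm]⟩

private lemma dB2_mk (f : V → Bool) (a b : V) : dB2 f s(a, b) = xor (f a) (f b) := rfl

private lemma crossB_mk (X : Finset V) (a b : V) :
    crossB X s(a, b) = xor (decide (a ∈ X)) (decide (b ∈ X)) := rfl

private lemma dB2_flip (X : Finset V) (f : V → Bool) (e : Sym2 V) :
    dB2 (fun v => if v ∈ X then !(f v) else f v) e = xor (crossB X e) (dB2 f e) := by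
  induction e using Sym2.ind with
  | _ a b =>
    simp only [dB2_mk, crossB_mk]
    cases hfa : f a <;> cases hfb : f b <;> by_cases ha : a ∈ X <;> by_cases hb : b ∈ X <;>
      simp [ha, hb, hfa, hfb]

private lemma cutE_eq (K : SimpleGraph V) (X : Finset V) :
    cutE (SGedges K) X
      = ((Set.toFinite K.edgeSet).toFinset.filter (fun e => crossB X e = true)).card := by
  rfl

private lemma degSG_eq_cutE (K : SimpleGraph V) (v : V) :
    degSG K v = cutE (SGedges K) {v} := by
  classical
  letI : DecidableRel K.Adj := Classical.decRel _
  have h1 : degSG K v = K.degree v := by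
    rw [degSG, ← SimpleGraph.card_neighborSet_eq_degree, Nat.card_eq_fintype_card]
  have h2 : (Set.toFinite K.edgeSet).toFinset.filter (fun e => crossB {v} e = true)
      = K.edgeFinset.filter (fun e => v ∈ e) := by
    ext e
    induction e using Sym2.ind with
    | _ a b =>
      simp only [Finset.mem_filter, Set.Finite.mem_toFinset, SimpleGraph.mem_edgeFinset,
        SimpleGraph.mem_edgeSet, crossB_mk, Sym2.mem_iff]
      by_cases ha : a = v <;> by_cases hb : b = v
      · subst ha; subst hb; simp
      · simp [ha, hb, eq_comm]
      · simp [ha, hb, eq_comm]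
      · simp [ha, hb]
        exact fun _ => ⟨fun h => ha h.symm, fun h => hb h.symm⟩
  rw [h1, ← SimpleGraph.card_incidenceFinset_eq_degree,
      SimpleGraph.incidenceFinset_eq_filter, cutE_eq, h2]

end Stmt2Aux

set_option maxHeartbeats 1000000 in
theorem stmt2 {V : Type*} [Fintype V] [DecidableEq V] (G : SimpleGraph V) :
    ∃ H : SimpleGraph V, H ≤ G ∧ H.Colorable 2 ∧
      (∀ X : Finset V, 2 * cutE (SGedges H) X ≥ cutE (SGedges G) X) ∧
      ∀ v : V, 2 * degSG H v ≥ degSG G v := by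
  classical
  set EG : Finset (Sym2 V) := (Set.toFinite G.edgeSet).toFinset with hEGdef
  have hmemEG : ∀ e, e ∈ EG ↔ e ∈ G.edgeSet := fun e => Set.Finite.mem_toFinset _
  obtain ⟨f, -, hf⟩ := Finset.exists_max_image (Finset.univ : Finset (V → Bool))
    (fun g => (EG.filter (fun e => dB2 g e = true)).card) ⟨fun _ => false, Finset.mem_univ _⟩
  have hsymm : Symmetric (fun a b : V => G.Adj a b ∧ dB2 f s(a, b) = true) := by
    intro a b h
    exact ⟨h.1.symm, by rw [Sym2.eq_swap]; exact h.2⟩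
  set H : SimpleGraph V :=
    ⟨fun a b => G.Adj a b ∧ dB2 f s(a, b) = true, ⟨fun a b h => hsymm h⟩, ⟨fun a h => G.irrefl h.1⟩⟩ with hHdef
  have hEHeq : (Set.toFinite H.edgeSet).toFinset = EG.filter (fun e => dB2 f e = true) := by
    ext e
    induction e using Sym2.ind with
    | _ a b =>
      rw [Set.Finite.mem_toFinset, Finset.mem_filter, hmemEG, SimpleGraph.mem_edgeSet,
        SimpleGraph.mem_edgeSet]
      try exact Iff.rfl
  -- the main counting argument
  have key : ∀ X : Finset V,
      (EG.filter (fun e => dB2 f e = false ∧ crossB X e = true)).card ≤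
      (EG.filter (fun e => dB2 f e = true ∧ crossB X e = true)).card := by
    intro X
    have hmax := hf (fun v => if v ∈ X then !(f v) else f v) (Finset.mem_univ _)
    have h1 : EG.filter (fun e => dB2 (fun v => if v ∈ X then !(f v) else f v) e = true)
        = EG.filter (fun e => xor (crossB X e) (dB2 f e) = true) := by
      apply Finset.filter_congr
      intro e _
      rw [dB2_flip]
    rw [h1] at hmax
    have split : ∀ p : Sym2 V → Bool,
        (EG.filter (fun e => p e = true)).card
          = (EG.filter (fun e => p e = true ∧ crossB X e = true)).card
          + (EG.filter (fun e => p e = true ∧ ¬ crossB X e = true)).card := by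
      intro p
      rw [← Finset.filter_filter, ← Finset.filter_filter,
        Finset.card_filter_add_card_filter_not]
    rw [split, split] at hmax
    have e1 : EG.filter (fun e => xor (crossB X e) (dB2 f e) = true ∧ crossB X e = true)
        = EG.filter (fun e => dB2 f e = false ∧ crossB X e = true) := by
      apply Finset.filter_congr
      intro e _
      cases hc : crossB X e <;> cases hd : dB2 f e <;> simp [hc, hd]
    have e2 : EG.filter (fun e => xor (crossB X e) (dB2 f e) = true ∧ ¬ crossB X e = true)
        = EG.filter (fun e => dB2 f e = true ∧ ¬ crossB X e = true) := by
      apply Finset.filter_congr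
      intro e _
      cases hc : crossB X e <;> cases hd : dB2 f e <;> simp [hc, hd]
    rw [e1, e2] at hmax
    omega
  have hcut : ∀ X : Finset V, 2 * cutE (SGedges H) X ≥ cutE (SGedges G) X := by
    intro X
    rw [cutE_eq, cutE_eq, hEHeq, Finset.filter_filter, ← hEGdef]
    have hGsplit : (EG.filter (fun e => crossB X e = true)).card
        = (EG.filter (fun e => dB2 f e = true ∧ crossB X e = true)).card
        + (EG.filter (fun e => dB2 f e = false ∧ crossB X e = true)).card := by
      rw [← Finset.filter_filter, ← Finset.filter_filter]
      rw [Finset.filter_comm, Finset.filter_comm (fun e => dB2 f e = false)]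
      have := Finset.card_filter_add_card_filter_not
        (s := EG.filter (fun e => crossB X e = true)) (p := fun e => dB2 f e = true)
      rw [← this]
      congr 1
      apply Finset.card_nbij id (fun a h => by simpa using h) (fun a _ b _ h => h)
      · intro a ha
        simp only [Finset.coe_filter, Set.mem_setOf_eq, Set.mem_image] at ha ⊢
        exact ⟨a, ⟨ha.1, by simp [ha.2]⟩, rfl⟩
    have := key X
    omega
  refine ⟨H, fun a b h => h.1, ?_, hcut, ?_⟩
  · refine ⟨SimpleGraph.Coloring.mk (fun v => if f v then 1 else 0) ?_⟩
    intro a b hab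
    have h2 := hab.2
    rw [dB2_mk] at h2
    cases hfa : f a <;> cases hfb : f b <;> simp [hfa, hfb] at h2 ⊢
  · intro v
    rw [degSG_eq_cutE, degSG_eq_cutE]
    exact hcut {v}
end

section
/- Let G be a multigraph with spanning subgraph G₀, let k ≥ 1 be a real number, and let l be an intersecting supermodular real function on subsets of V(G) with l(∅)=0. If d_{G₀}(A) ≥ (1/k)·d_G(A) for every vertex set A, then for every S ⊆ V(G): Θ_l(G₀ \ S) ≤ (1/k)·Θ_{kl}(G \ S) + Σ_{v∈S}(½ d_{G₀}(v) − (1/(2k)) d_G(v)) − e_{G₀}(S) + (1/k)·e_G(S). -/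
open Finset

open Paper

set_option linter.unusedSectionVars false
namespace StmtAux

variable {V : Type*} [Fintype V] [DecidableEq V]

lemma crossB_mk (X : Finset V) (a b : V) :
    crossB X s(a, b) = xor (decide (a ∈ X)) (decide (b ∈ X)) := rfl

lemma bothB_mk (X : Finset V) (a b : V) :
    bothB X s(a, b) = (decide (a ∈ X) && decide (b ∈ X)) := rfl

lemma filter_card_eq_sum {α : Type*} (M : Multiset α) (p : α → Prop) [DecidablePred p] :
    (M.filter p).card = (M.map fun e => if p e then (1:ℕ) else 0).sum := by
  induction M using Multiset.induction_on with
  | empty => simp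
  | cons e M ih => by_cases h : p e <;> simp [h, ih, Nat.add_comm]

lemma card_eq_sum_map_one {α : Type*} (M : Multiset α) :
    M.card = (M.map fun _ => (1:ℕ)).sum := by
  induction M using Multiset.induction_on with
  | empty => simp
  | cons e M ih =>
    rw [Multiset.map_cons, Multiset.sum_cons, Multiset.card_cons, ih]
    omega

lemma sum_map_add {α : Type*} (M : Multiset α) (f g : α → ℕ) :
    (M.map fun e => f e + g e).sum = (M.map f).sum + (M.map g).sum := by
  induction M using Multiset.induction_on with
  | empty => simp
  | cons e M ih => simp [ih]; ring

lemma map_sum_swap {α ι : Type*} (P : Finset ι) (M : Multiset α) (f : ι → α → ℕ) :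
    ∑ A ∈ P, (M.map (f A)).sum = (M.map fun e => ∑ A ∈ P, f A e).sum := by
  induction M using Multiset.induction_on with
  | empty => simp
  | cons e M ih => simp [Finset.sum_add_distrib, ih]

variable {W : Finset V} {P : Finset (Finset V)}

lemma part_subset (hP : IsPartitionOf W P) {A} (hA : A ∈ P) : A ⊆ W := by
  have h := Finset.le_sup (f := id) hA
  rw [hP.2.2] at h; exact h

lemma exists_part (hP : IsPartitionOf W P) {a} (ha : a ∈ W) : ∃ A ∈ P, a ∈ A := by
  rw [← hP.2.2] at ha
  simpa using (Finset.mem_sup.mp ha)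

lemma part_eq (hP : IsPartitionOf W P) {a : V} {A B} (hA : A ∈ P) (hB : B ∈ P)
    (haA : a ∈ A) (haB : a ∈ B) : A = B := by
  by_contra h
  exact (Finset.disjoint_left.mp (hP.2.1 A hA B hB h)) haA haB

lemma sum_ind_mem (hP : IsPartitionOf W P) (a : V) :
    (∑ A ∈ P, if a ∈ A then (1:ℕ) else 0) = if a ∈ W then 1 else 0 := by
  by_cases ha : a ∈ W
  · obtain ⟨A₀, hA₀, haA₀⟩ := exists_part hP ha
    rw [Finset.sum_eq_single_of_mem A₀ hA₀, if_pos haA₀, if_pos ha]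
    intro B hB hne
    rw [if_neg]; intro haB; exact hne (part_eq hP hB hA₀ haB haA₀)
  · rw [if_neg ha, Finset.sum_eq_zero]
    intro A hA; rw [if_neg]; intro haA; exact ha (part_subset hP hA haA)

lemma sum_ind_both (hP : IsPartitionOf W P) (a b : V) :
    (∑ A ∈ P, if a ∈ A ∧ b ∈ A then (1:ℕ) else 0)
      = if ∃ A ∈ P, a ∈ A ∧ b ∈ A then 1 else 0 := by
  by_cases h : ∃ A ∈ P, a ∈ A ∧ b ∈ A
  · obtain ⟨A₀, hA₀, hab⟩ := h
    rw [Finset.sum_eq_single_of_mem A₀ hA₀, if_pos hab, if_pos ⟨A₀, hA₀, hab⟩]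
    intro B hB hne; rw [if_neg]; rintro ⟨haB, _⟩
    exact hne (part_eq hP hB hA₀ haB hab.1)
  · rw [if_neg h, Finset.sum_eq_zero]
    intro A hA; rw [if_neg]; intro hab; exact h ⟨A, hA, hab⟩

end StmtAux
namespace StmtAux

variable {V : Type*} [Fintype V] [DecidableEq V] {W : Finset V} {P : Finset (Finset V)}

lemma bothB_true_iff (X : Finset V) (a b : V) :
    bothB X s(a, b) = true ↔ a ∈ X ∧ b ∈ X := by
  rw [bothB_mk]; simp

lemma bothB_false_iff (X : Finset V) (a b : V) :
    bothB X s(a, b) = false ↔ ¬ (a ∈ X ∧ b ∈ X) := by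
  rw [← Bool.not_eq_true, bothB_true_iff]

lemma crossB_true_iff (X : Finset V) (a b : V) :
    crossB X s(a, b) = true ↔ ((a ∈ X ∧ b ∉ X) ∨ (b ∈ X ∧ a ∉ X)) := by
  rw [crossB_mk]
  by_cases ha : a ∈ X <;> by_cases hb : b ∈ X <;> simp [ha, hb]

/-- Per-edge counting for the partition identity. -/
lemma edge_partition_count (hP : IsPartitionOf W P) (e : Sym2 V) (he : bothB W e = true) :
    ((if (∀ A ∈ P, bothB A e = false) then (1:ℕ) else 0)
      + ∑ A ∈ P, if bothB A e = true then (1:ℕ) else 0) = 1 := by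
  induction e using Sym2.inductionOn with
  | hf a b =>
    rw [bothB_true_iff] at he
    have hsum : (∑ A ∈ P, if bothB A s(a,b) = true then (1:ℕ) else 0)
        = ∑ A ∈ P, if a ∈ A ∧ b ∈ A then (1:ℕ) else 0 :=
      Finset.sum_congr rfl fun A _ => by simp [bothB_true_iff]
    rw [hsum, sum_ind_both hP a b]
    by_cases h : ∃ A ∈ P, a ∈ A ∧ b ∈ A
    · obtain ⟨A₀, hA₀, hab⟩ := h
      have hno : ¬ (∀ A ∈ P, bothB A s(a,b) = false) := by
        intro hall
        have := hall A₀ hA₀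
        rw [bothB_false_iff] at this
        exact this hab
      rw [if_neg hno, if_pos ⟨A₀, hA₀, hab⟩]
    · have hyes : (∀ A ∈ P, bothB A s(a,b) = false) := by
        intro A hA
        rw [bothB_false_iff]
        intro hab; exact h ⟨A, hA, hab⟩
      rw [if_pos hyes, if_neg h]

/-- Per-edge counting: sum over parts of the cross indicator. -/
lemma edge_cut_count (hP : IsPartitionOf W P) (a b : V) (hab : a ≠ b) :
    (∑ A ∈ P, if crossB A s(a,b) = true then (1:ℕ) else 0)
      = 2 * (if ((∀ A ∈ P, bothB A s(a,b) = false) ∧ bothB W s(a,b) = true) then 1 else 0)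
        + (if crossB W s(a,b) = true then 1 else 0) := by
  have hsplit : (∑ A ∈ P, if crossB A s(a,b) = true then (1:ℕ) else 0)
      + 2 * (∑ A ∈ P, if a ∈ A ∧ b ∈ A then (1:ℕ) else 0)
      = (∑ A ∈ P, if a ∈ A then (1:ℕ) else 0) + (∑ A ∈ P, if b ∈ A then (1:ℕ) else 0) := by
    rw [Finset.mul_sum, ← Finset.sum_add_distrib, ← Finset.sum_add_distrib]
    refine Finset.sum_congr rfl fun A _ => ?_
    by_cases ha : a ∈ A <;> by_cases hb : b ∈ A <;>
      simp [crossB_true_iff, ha, hb]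
  rw [sum_ind_mem hP a, sum_ind_mem hP b, sum_ind_both hP a b] at hsplit
  have hgoal2 : 2 * (if ((∀ A ∈ P, bothB A s(a,b) = false) ∧ bothB W s(a,b) = true) then (1:ℕ) else 0)
        + (if crossB W s(a,b) = true then 1 else 0)
        + 2 * (if ∃ A ∈ P, a ∈ A ∧ b ∈ A then (1:ℕ) else 0)
      = (if a ∈ W then 1 else 0) + (if b ∈ W then 1 else 0) := by
    by_cases ha : a ∈ W <;> by_cases hb : b ∈ W
    · have hcW : ¬ (crossB W s(a,b) = true) := by
        rw [crossB_true_iff]; push_neg; exact ⟨fun _ => hb, fun _ => ha⟩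
      rw [if_neg hcW, if_pos ha, if_pos hb]
      by_cases h : ∃ A ∈ P, a ∈ A ∧ b ∈ A
      · rw [if_pos h, if_neg]
        rintro ⟨hall, -⟩
        obtain ⟨A₀, hA₀, hab'⟩ := h
        have := hall A₀ hA₀
        rw [bothB_false_iff] at this; exact this hab'
      · rw [if_neg h, if_pos]
        constructor
        · intro A hA; rw [bothB_false_iff]; intro hab'; exact h ⟨A, hA, hab'⟩
        · rw [bothB_true_iff]; exact ⟨ha, hb⟩
    · have h1 : ¬ (((∀ A ∈ P, bothB A s(a,b) = false)) ∧ bothB W s(a,b) = true) := by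
        rintro ⟨-, hW⟩; rw [bothB_true_iff] at hW; exact hb hW.2
      have h2 : crossB W s(a,b) = true := by
        rw [crossB_true_iff]; exact Or.inl ⟨ha, hb⟩
      have h3 : ¬ ∃ A ∈ P, a ∈ A ∧ b ∈ A := by
        rintro ⟨A, hA, -, hbA⟩; exact hb (part_subset hP hA hbA)
      rw [if_neg h1, if_pos h2, if_neg h3, if_pos ha, if_neg hb]
    · have h1 : ¬ (((∀ A ∈ P, bothB A s(a,b) = false)) ∧ bothB W s(a,b) = true) := by
        rintro ⟨-, hW⟩; rw [bothB_true_iff] at hW; exact ha hW.1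
      have h2 : crossB W s(a,b) = true := by
        rw [crossB_true_iff]; exact Or.inr ⟨hb, ha⟩
      have h3 : ¬ ∃ A ∈ P, a ∈ A ∧ b ∈ A := by
        rintro ⟨A, hA, haA, -⟩; exact ha (part_subset hP hA haA)
      rw [if_neg h1, if_pos h2, if_neg h3, if_neg ha, if_pos hb]
    · have h1 : ¬ (((∀ A ∈ P, bothB A s(a,b) = false)) ∧ bothB W s(a,b) = true) := by
        rintro ⟨-, hW⟩; rw [bothB_true_iff] at hW; exact ha hW.1
      have h2 : ¬ (crossB W s(a,b) = true) := by
        rw [crossB_true_iff]; push_neg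
        exact ⟨fun h => absurd h ha, fun h => absurd h hb⟩
      have h3 : ¬ ∃ A ∈ P, a ∈ A ∧ b ∈ A := by
        rintro ⟨A, hA, haA, -⟩; exact ha (part_subset hP hA haA)
      rw [if_neg h1, if_neg h2, if_neg h3, if_neg ha, if_neg hb]
  omega

/-- Per-edge counting for degrees over `S`. -/
lemma edge_deg_count (S : Finset V) (a b : V) (hab : a ≠ b) :
    (∑ v ∈ S, if crossB {v} s(a,b) = true then (1:ℕ) else 0)
      = 2 * (if bothB S s(a,b) = true then 1 else 0)
        + (if crossB S s(a,b) = true then 1 else 0) := by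
  have hsplit : ∀ v : V, (if crossB {v} s(a,b) = true then (1:ℕ) else 0)
      = (if v = a then 1 else 0) + (if v = b then 1 else 0) := by
    intro v
    have hc : crossB {v} s(a,b) = true ↔ (v = a ∨ v = b) := by
      rw [crossB_true_iff]
      simp only [Finset.mem_singleton]
      constructor
      · rintro (⟨h, -⟩ | ⟨h, -⟩)
        · exact Or.inl h.symm
        · exact Or.inr h.symm
      · rintro (rfl | rfl)
        · exact Or.inl ⟨rfl, fun h => hab h.symm⟩
        · exact Or.inr ⟨rfl, hab⟩
    by_cases hva : v = a <;> by_cases hvb : v = b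
    · exact absurd (hva.symm.trans hvb) hab
    · rw [if_pos (hc.mpr (Or.inl hva)), if_pos hva, if_neg hvb]
    · rw [if_pos (hc.mpr (Or.inr hvb)), if_neg hva, if_pos hvb]
    · rw [if_neg (fun h => ((hc.mp h).elim hva hvb)), if_neg hva, if_neg hvb]
  simp only [hsplit]
  rw [Finset.sum_add_distrib, Finset.sum_ite_eq' S a (fun _ => (1:ℕ)),
    Finset.sum_ite_eq' S b (fun _ => (1:ℕ))]
  by_cases ha : a ∈ S <;> by_cases hb : b ∈ S <;>
    simp [bothB_true_iff, crossB_true_iff, ha, hb]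

end StmtAux
namespace StmtAux

variable {V : Type*} [Fintype V] [DecidableEq V] {W : Finset V} {P : Finset (Finset V)}

lemma bothB_mono {A : Finset V} (hAW : A ⊆ W) (e : Sym2 V) (h : bothB A e = true) :
    bothB W e = true := by
  induction e using Sym2.inductionOn with
  | hf a b =>
    rw [bothB_true_iff] at h ⊢
    exact ⟨hAW h.1, hAW h.2⟩

lemma insideE_filter {A : Finset V} (hAW : A ⊆ W) (E : Multiset (Sym2 V)) :
    insideE E A = ((E.filter fun e => bothB W e = true).filter fun e => bothB A e = true).card := by
  rw [Multiset.filter_filter]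
  unfold insideE
  congr 1
  refine (Multiset.filter_congr fun e _ => ?_)
  constructor
  · intro h; exact ⟨h, bothB_mono hAW e h⟩
  · exact fun h => h.1

/-- The partition identity: crossing edges + inside-part edges = all edges inside `W`. -/
lemma partition_count (hP : IsPartitionOf W P) (E : Multiset (Sym2 V)) :
    ePart (E.filter fun e => bothB W e = true) P + ∑ A ∈ P, insideE E A = insideE E W := by
  classical
  set F := E.filter fun e => bothB W e = true with hF
  have h1 : ePart F P = (F.map fun e =>
      if (∀ A ∈ P, bothB A e = false) then (1:ℕ) else 0).sum := by
    unfold ePart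
    rw [filter_card_eq_sum]
    congr 1
    refine Multiset.map_congr rfl fun e _ => ?_
    by_cases h : ∀ A ∈ P, bothB A e = false <;> simp [h]
  have h2 : ∀ A ∈ P, insideE E A = (F.map fun e => if bothB A e = true then (1:ℕ) else 0).sum := by
    intro A hA
    rw [insideE_filter (part_subset hP hA) E, ← hF, filter_card_eq_sum]
  have h3 : insideE E W = F.card := rfl
  rw [h1, h3, card_eq_sum_map_one,
    Finset.sum_congr rfl h2, map_sum_swap, ← sum_map_add]
  refine congrArg _ (Multiset.map_congr rfl fun e he => ?_)
  have hbw : bothB W e = true := by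
    rw [hF] at he
    exact (Multiset.mem_filter.mp he).2
  exact edge_partition_count hP e hbw

/-- Sum of cuts over a partition of `W`. -/
lemma cut_partition_count (hP : IsPartitionOf W P) (E : Multiset (Sym2 V))
    (hE : ∀ e ∈ E, ¬ e.IsDiag) :
    ∑ A ∈ P, cutE E A = 2 * ePart (E.filter fun e => bothB W e = true) P + cutE E W := by
  classical
  have h1 : ∀ A : Finset V, cutE E A
      = (E.map fun e => if crossB A e = true then (1:ℕ) else 0).sum := by
    intro A; unfold cutE; rw [filter_card_eq_sum]
  have h2 : ePart (E.filter fun e => bothB W e = true) P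
      = (E.map fun e => if ((∀ A ∈ P, bothB A e = false) ∧ bothB W e = true)
          then (1:ℕ) else 0).sum := by
    unfold ePart
    rw [Multiset.filter_filter, filter_card_eq_sum]
    congr 1
    refine Multiset.map_congr rfl fun e _ => ?_
    by_cases h : (∀ A ∈ P, bothB A e = false) ∧ bothB W e = true
    · rw [if_pos h, if_pos]; simpa using h
    · rw [if_neg h, if_neg]; simpa using h
  rw [Finset.sum_congr rfl (fun A _ => h1 A), map_sum_swap, h2, h1 W,
    ← Multiset.sum_map_mul_left, ← sum_map_add]
  refine congrArg _ (Multiset.map_congr rfl fun e he => ?_)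
  induction e using Sym2.inductionOn with
  | hf a b =>
    have hab : a ≠ b := by
      intro h; exact hE _ he (by rw [h]; exact Sym2.mk_isDiag_iff.mpr rfl)
    exact edge_cut_count hP a b hab

/-- Sum of degrees over `S`. -/
lemma deg_count (S : Finset V) (E : Multiset (Sym2 V)) (hE : ∀ e ∈ E, ¬ e.IsDiag) :
    ∑ v ∈ S, cutE E {v} = 2 * insideE E S + cutE E S := by
  have h1 : ∀ A : Finset V, cutE E A
      = (E.map fun e => if crossB A e = true then (1:ℕ) else 0).sum := by
    intro A; unfold cutE; rw [filter_card_eq_sum]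
  have h2 : insideE E S = (E.map fun e => if bothB S e = true then (1:ℕ) else 0).sum := by
    unfold insideE; rw [filter_card_eq_sum]
  rw [Finset.sum_congr rfl (fun v _ => h1 {v}), map_sum_swap, h2, h1 S,
    ← Multiset.sum_map_mul_left, ← sum_map_add]
  refine congrArg _ (Multiset.map_congr rfl fun e he => ?_)
  induction e using Sym2.inductionOn with
  | hf a b =>
    have hab : a ≠ b := by
      intro h; exact hE _ he (by rw [h]; exact Sym2.mk_isDiag_iff.mpr rfl)
    exact edge_deg_count S a b hab

lemma cut_compl (S : Finset V) (E : Multiset (Sym2 V)) :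
    cutE E (Finset.univ \ S) = cutE E S := by
  unfold cutE
  congr 1
  refine Multiset.filter_congr fun e _ => ?_
  induction e using Sym2.inductionOn with
  | hf a b =>
    rw [crossB_true_iff, crossB_true_iff]
    simp only [Finset.mem_sdiff, Finset.mem_univ, true_and, not_not]
    tauto

lemma partition_card_le (hP : IsPartitionOf W P) : P.card ≤ W.card := by
  have hW : W = P.biUnion (fun A => A) := by
    rw [← hP.2.2, Finset.sup_eq_biUnion]; rfl
  rw [hW, Finset.card_biUnion (fun A hA B hB hne => hP.2.1 A hA B hB hne)]
  calc P.card = ∑ _A ∈ P, 1 := by simp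
    _ ≤ ∑ A ∈ P, A.card := Finset.sum_le_sum fun A hA => Finset.card_pos.mpr (hP.1 A hA)

/-- Reformulation of `LPCOn` via the "potential" `g A = m A + insideE E A`. -/
lemma lpc_iff (E : Multiset (Sym2 V)) (A : Finset V) (m : Finset V → ℝ) :
    LPCOn E A m ↔ ∀ PA, IsPartitionOf A PA →
      ∑ C ∈ PA, (m C + (insideE E C : ℝ)) ≤ m A + (insideE E A : ℝ) := by
  unfold LPCOn
  constructor
  · intro h PA hPA
    have h1 := h PA hPA
    have h2 : (ePart (E.filter fun e => bothB A e = true) PA : ℝ)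
        + ∑ C ∈ PA, (insideE E C : ℝ) = (insideE E A : ℝ) := by
      exact_mod_cast congrArg (Nat.cast : ℕ → ℝ) (partition_count hPA E)
    rw [Finset.sum_add_distrib]
    linarith
  · intro h PA hPA
    have h1 := h PA hPA
    have h2 : (ePart (E.filter fun e => bothB A e = true) PA : ℝ)
        + ∑ C ∈ PA, (insideE E C : ℝ) = (insideE E A : ℝ) := by
      exact_mod_cast congrArg (Nat.cast : ℕ → ℝ) (partition_count hPA E)
    rw [Finset.sum_add_distrib] at h1
    linarith

end StmtAux
namespace StmtAux

variable {V : Type*} [Fintype V] [DecidableEq V]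

lemma key_aux (E : Multiset (Sym2 V)) (W : Finset V) (m : Finset V → ℝ)
    (Q : Finset (Finset V)) (hQ : IsLPCComponents E W m Q) :
    ∀ n : ℕ, ∀ P : Finset (Finset V), Fintype.card V + 1 ≤ P.card + n →
      IsPartitionOf W P →
      ∑ A ∈ P, (m A + (insideE E A : ℝ)) ≤ ∑ B ∈ Q, (m B + (insideE E B : ℝ)) := by
  intro n
  induction n with
  | zero =>
    intro P hn hP
    exfalso
    have h1 := partition_card_le hP
    have h2 := Finset.card_le_univ W
    omega
  | succ n ih =>
    intro P hn hP
    classical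
    by_cases hall : ∀ A ∈ P, LPCOn E A m
    · -- every part is LPC: map into the components Q
      have hchoice : ∀ A ∈ P, ∃ B ∈ Q, A ⊆ B := fun A hA =>
        hQ.2.2 A (part_subset hP hA) (hP.1 A hA) (hall A hA)
      choose! φ hφ1 hφ2 using hchoice
      rw [← Finset.sum_fiberwise_of_maps_to hφ1 (fun A => m A + (insideE E A : ℝ))]
      refine Finset.sum_le_sum fun B hB => ?_
      have hfib : IsPartitionOf B (P.filter fun A => φ A = B) := by
        refine ⟨fun A hA => hP.1 A (Finset.mem_filter.mp hA).1,
          fun A hA A' hA' hne => hP.2.1 A (Finset.mem_filter.mp hA).1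
            A' (Finset.mem_filter.mp hA').1 hne, ?_⟩
        apply le_antisymm
        · refine Finset.sup_le fun A hA => ?_
          obtain ⟨hAP, hAB⟩ := Finset.mem_filter.mp hA
          exact hAB ▸ hφ2 A hAP
        · intro v hv
          have hvW : v ∈ W := part_subset hQ.1 hB hv
          obtain ⟨A, hA, hvA⟩ := exists_part hP hvW
          have hφA : φ A = B :=
            part_eq hQ.1 (hφ1 A hA) hB (hφ2 A hA hvA) hv
          exact Finset.mem_sup.mpr ⟨A, Finset.mem_filter.mpr ⟨hA, hφA⟩, hvA⟩
      exact (lpc_iff E B m).mp (hQ.2.1 B hB) _ hfib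
    · -- some part is not LPC: refine it
      push_neg at hall
      obtain ⟨A₀, hA₀, hnl⟩ := hall
      rw [lpc_iff] at hnl
      push_neg at hnl
      obtain ⟨PA, hPA, hgt⟩ := hnl
      have hdisj : Disjoint (P.erase A₀) PA := by
        rw [Finset.disjoint_left]
        intro C hC hCPA
        obtain ⟨hne, hCP⟩ := Finset.mem_erase.mp hC
        have hd := hP.2.1 C hCP A₀ hA₀ hne
        obtain ⟨v, hv⟩ := hPA.1 C hCPA
        exact (Finset.disjoint_left.mp hd hv) (part_subset hPA hCPA hv)
      have hA₀notPA : A₀ ∉ PA := by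
        intro hmem
        have hsingle : PA = {A₀} := by
          refine Finset.eq_singleton_iff_unique_mem.mpr ⟨hmem, ?_⟩
          intro C hC
          by_contra hne
          have hd := hPA.2.1 C hC A₀ hmem hne
          obtain ⟨v, hv⟩ := hPA.1 C hC
          exact (Finset.disjoint_left.mp hd hv) (part_subset hPA hC hv)
        rw [hsingle, Finset.sum_singleton] at hgt
        exact lt_irrefl _ hgt
      set P' := (P.erase A₀) ∪ PA with hP'def
      have hP' : IsPartitionOf W P' := by
        refine ⟨?_, ?_, ?_⟩
        · intro A hA
          rcases Finset.mem_union.mp hA with h | h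
          · exact hP.1 A (Finset.mem_of_mem_erase h)
          · exact hPA.1 A h
        · intro A hA B hB hne
          rcases Finset.mem_union.mp hA with h1 | h1 <;>
            rcases Finset.mem_union.mp hB with h2 | h2
          · exact hP.2.1 A (Finset.mem_of_mem_erase h1) B (Finset.mem_of_mem_erase h2) hne
          · obtain ⟨hne1, hAP⟩ := Finset.mem_erase.mp h1
            exact Finset.disjoint_of_subset_right (part_subset hPA h2)
              (hP.2.1 A hAP A₀ hA₀ hne1)
          · obtain ⟨hne2, hBP⟩ := Finset.mem_erase.mp h2
            exact Finset.disjoint_of_subset_left (part_subset hPA h1)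
              (Finset.disjoint_of_subset_right (Finset.Subset.refl _)
                (hP.2.1 A₀ hA₀ B hBP (Ne.symm hne2))).symm.symm
          · exact hPA.2.1 A h1 B h2 hne
        · rw [Finset.sup_union, hPA.2.2, ← hP.2.2]
          apply le_antisymm
          · exact sup_le (Finset.sup_le fun A hA =>
              Finset.le_sup (f := id) (Finset.mem_of_mem_erase hA))
              (Finset.le_sup (f := id) hA₀)
          · refine Finset.sup_le fun A hA => ?_
            rcases eq_or_ne A A₀ with rfl | hne
            · exact le_sup_right
            · exact le_trans (Finset.le_sup (Finset.mem_erase.mpr ⟨hne, hA⟩)) le_sup_left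
      have hsum' : ∑ A ∈ P', (m A + (insideE E A : ℝ))
          = ∑ A ∈ P.erase A₀, (m A + (insideE E A : ℝ))
            + ∑ C ∈ PA, (m C + (insideE E C : ℝ)) := Finset.sum_union hdisj
      have hsumP : ∑ A ∈ P, (m A + (insideE E A : ℝ))
          = ∑ A ∈ P.erase A₀, (m A + (insideE E A : ℝ))
            + (m A₀ + (insideE E A₀ : ℝ)) := (Finset.sum_erase_add P _ hA₀).symm
      have hcard : P.card + 1 ≤ P'.card := by
        have h2 : 2 ≤ PA.card := by
          rcases Nat.lt_or_ge PA.card 2 with h | h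
          · interval_cases h' : PA.card
            · exfalso
              have : PA = ∅ := Finset.card_eq_zero.mp h'
              rw [this] at hPA
              have := hPA.2.2
              simp at this
              obtain ⟨v, hv⟩ := hP.1 A₀ hA₀
              rw [← this] at hv
              exact absurd hv (Finset.notMem_empty v)
            · exfalso
              obtain ⟨C, hC⟩ := Finset.card_eq_one.mp h'
              have hsup := hPA.2.2
              rw [hC, Finset.sup_singleton] at hsup
              rw [hC] at hA₀notPA
              exact hA₀notPA (hsup ▸ Finset.mem_singleton_self C)
          · exact h
        rw [hP'def, Finset.card_union_of_disjoint hdisj, Finset.card_erase_of_mem hA₀]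
        have : 1 ≤ P.card := Finset.card_pos.mpr ⟨A₀, hA₀⟩
        omega
      have hlt : ∑ A ∈ P, (m A + (insideE E A : ℝ))
          < ∑ A ∈ P', (m A + (insideE E A : ℝ)) := by
        rw [hsum', hsumP]; linarith
      exact le_trans hlt.le (ih P' (by omega) hP')

lemma key_lemma (E : Multiset (Sym2 V)) (W : Finset V) (m : Finset V → ℝ)
    (Q : Finset (Finset V)) (hQ : IsLPCComponents E W m Q)
    (P : Finset (Finset V)) (hP : IsPartitionOf W P) :
    ∑ A ∈ P, (m A + (insideE E A : ℝ)) ≤ ∑ B ∈ Q, (m B + (insideE E B : ℝ)) :=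
  key_aux E W m Q hQ (Fintype.card V + 1) P (by omega) hP

end StmtAux
theorem stmt7 {V : Type*} [Fintype V] [DecidableEq V] (G G₀ : MGraph V)
    (hsp : G₀.edges ≤ G.edges) (k : ℝ) (hk : 1 ≤ k)
    (l : Finset V → ℝ) (hl0 : l ∅ = 0) (hsm : IntersectingSupermodular l)
    (hdeg : ∀ A : Finset V, (cut G₀ A : ℝ) ≥ (1 / k) * (cut G A : ℝ)) :
    ∀ S : Finset V, ∀ P Q : Finset (Finset V),
      IsLPCComponents G₀.edges (Finset.univ \ S) l P →
      IsLPCComponents G.edges (Finset.univ \ S) (fun A => k * l A) Q →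
      ThetaVal G₀.edges (Finset.univ \ S) l P ≤
        (1 / k) * ThetaVal G.edges (Finset.univ \ S) (fun A => k * l A) Q
          + (∑ v ∈ S, ((deg G₀ v : ℝ) / 2 - (deg G v : ℝ) / (2 * k)))
          - (insideE G₀.edges S : ℝ) + (1 / k) * (insideE G.edges S : ℝ) := by
  intro S P Q hP hQ
  classical
  have hk0 : (0:ℝ) < k := lt_of_lt_of_le one_pos hk
  have hkne : k ≠ 0 := ne_of_gt hk0
  have hkinv : (0:ℝ) ≤ 1 / k := by positivity
  set W : Finset V := Finset.univ \ S with hWdef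
  -- abbreviations (real casts of the relevant counts)
  -- partition identities, real versions
  have r2 : (ePart (G.edges.filter fun e => bothB W e = true) P : ℝ)
      + ∑ A ∈ P, (insideE G.edges A : ℝ) = (insideE G.edges W : ℝ) := by
    exact_mod_cast congrArg (Nat.cast : ℕ → ℝ) (StmtAux.partition_count hP.1 G.edges)
  have r3 : (ePart (G.edges.filter fun e => bothB W e = true) Q : ℝ)
      + ∑ B ∈ Q, (insideE G.edges B : ℝ) = (insideE G.edges W : ℝ) := by
    exact_mod_cast congrArg (Nat.cast : ℕ → ℝ) (StmtAux.partition_count hQ.1 G.edges)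
  have r4 : 2 * (ePart (G₀.edges.filter fun e => bothB W e = true) P : ℝ)
      + (cutE G₀.edges W : ℝ) = ∑ A ∈ P, (cutE G₀.edges A : ℝ) := by
    exact_mod_cast (congrArg (Nat.cast : ℕ → ℝ)
      (StmtAux.cut_partition_count hP.1 G₀.edges G₀.loopless)).symm
  have r5 : 2 * (ePart (G.edges.filter fun e => bothB W e = true) P : ℝ)
      + (cutE G.edges W : ℝ) = ∑ A ∈ P, (cutE G.edges A : ℝ) := by
    exact_mod_cast (congrArg (Nat.cast : ℕ → ℝ)
      (StmtAux.cut_partition_count hP.1 G.edges G.loopless)).symm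
  have r6 : (∑ v ∈ S, (deg G₀ v : ℝ))
      = 2 * (insideE G₀.edges S : ℝ) + (cutE G₀.edges S : ℝ) := by
    have hnat : ∑ v ∈ S, deg G₀ v = 2 * insideE G₀.edges S + cutE G₀.edges S :=
      StmtAux.deg_count S G₀.edges G₀.loopless
    exact_mod_cast congrArg (Nat.cast : ℕ → ℝ) hnat
  have r7 : (∑ v ∈ S, (deg G v : ℝ))
      = 2 * (insideE G.edges S : ℝ) + (cutE G.edges S : ℝ) := by
    have hnat : ∑ v ∈ S, deg G v = 2 * insideE G.edges S + cutE G.edges S :=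
      StmtAux.deg_count S G.edges G.loopless
    exact_mod_cast congrArg (Nat.cast : ℕ → ℝ) hnat
  have r8 : (cutE G₀.edges W : ℝ) = (cutE G₀.edges S : ℝ) := by
    exact_mod_cast congrArg (Nat.cast : ℕ → ℝ) (StmtAux.cut_compl S G₀.edges)
  have r9 : (cutE G.edges W : ℝ) = (cutE G.edges S : ℝ) := by
    exact_mod_cast congrArg (Nat.cast : ℕ → ℝ) (StmtAux.cut_compl S G.edges)
  -- the key lemma (P is a test partition for the kl-components Q of G)
  have hkey : ∑ A ∈ P, (k * l A) + ∑ A ∈ P, (insideE G.edges A : ℝ)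
      ≤ ∑ B ∈ Q, (k * l B) + ∑ B ∈ Q, (insideE G.edges B : ℝ) := by
    have := StmtAux.key_lemma G.edges W (fun A => k * l A) Q hQ P hP.1
    rw [Finset.sum_add_distrib, Finset.sum_add_distrib] at this
    exact this
  -- hdeg summed over P
  have h2 : (1/k) * ∑ A ∈ P, (cutE G.edges A : ℝ) ≤ ∑ A ∈ P, (cutE G₀.edges A : ℝ) := by
    rw [Finset.mul_sum]
    exact Finset.sum_le_sum fun A _ => hdeg A
  -- step: divide the key inequality by k
  have hstep : ∑ A ∈ P, (k * l A) - (ePart (G.edges.filter fun e => bothB W e = true) P : ℝ)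
      ≤ ∑ B ∈ Q, (k * l B) - (ePart (G.edges.filter fun e => bothB W e = true) Q : ℝ) := by
    linarith
  have h1a := mul_le_mul_of_nonneg_left hstep hkinv
  have h1b : (1/k) * (∑ A ∈ P, (k * l A)
        - (ePart (G.edges.filter fun e => bothB W e = true) P : ℝ))
      = (∑ A ∈ P, l A)
        - (1/k) * (ePart (G.edges.filter fun e => bothB W e = true) P : ℝ) := by
    rw [← Finset.mul_sum]
    field_simp
  have h1 : (∑ A ∈ P, l A)
        - (1/k) * (ePart (G.edges.filter fun e => bothB W e = true) P : ℝ)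
      ≤ (1/k) * (∑ B ∈ Q, (k * l B)
        - (ePart (G.edges.filter fun e => bothB W e = true) Q : ℝ)) := by
    rw [← h1b]; exact h1a
  -- the 1/k-scaled cut identity
  have h3 : 2 * ((1/k) * (ePart (G.edges.filter fun e => bothB W e = true) P : ℝ))
      + (1/k) * (cutE G.edges S : ℝ)
      = (1/k) * ∑ A ∈ P, (cutE G.edges A : ℝ) := by
    linear_combination (1/k) * r5 - (1/k) * r9
  -- the 1/(2k)-scaled degree identity
  have h7 : (∑ v ∈ S, (deg G v : ℝ)) / (2*k)
      = (1/k) * (insideE G.edges S : ℝ) + (1/k) * (cutE G.edges S : ℝ) / 2 := by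
    rw [r7]; field_simp
  have hsplit : ∑ v ∈ S, ((deg G₀ v : ℝ) / 2 - (deg G v : ℝ) / (2 * k))
      = (∑ v ∈ S, (deg G₀ v : ℝ)) / 2 - (∑ v ∈ S, (deg G v : ℝ)) / (2*k) := by
    rw [Finset.sum_sub_distrib, Finset.sum_div, Finset.sum_div]
  simp only [ThetaVal]
  rw [hsplit]
  linarith
end

section
/- Let l be an intersecting supermodular set function on subsets of V(G) with l(∅)=0, and let k ≥ 1 be a real number. Then Θ_l(G) ≤ (1/k)·Θ_{kl}(G), where Θ is computed with respect to the partition of V(G) into l-partition-connected (respectively kl-partition-connected) components. -/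
open Finset

open Paper

set_option linter.unusedSectionVars false
set_option maxHeartbeats 1000000

section Aux
variable {V : Type*} [Fintype V] [DecidableEq V]

lemma bothB_true_iff (X : Finset V) (a b : V) :
    bothB X s(a, b) = true ↔ a ∈ X ∧ b ∈ X := by
  simp [bothB]

lemma bothB_false_iff (X : Finset V) (a b : V) :
    bothB X s(a, b) = false ↔ ¬(a ∈ X ∧ b ∈ X) := by
  rw [Bool.eq_false_iff]
  exact not_congr (bothB_true_iff X a b)

/-- edges of `E` with both ends in `X` and crossing `P`. -/
def cc (E : Multiset (Sym2 V)) (X : Finset V) (P : Finset (Finset V)) : ℕ :=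
  Multiset.countP (fun e => bothB X e = true ∧ ∀ A ∈ P, bothB A e = false) E

lemma ePart_eq_cc (E : Multiset (Sym2 V)) (X : Finset V) (P : Finset (Finset V)) :
    ePart (E.filter (fun e => bothB X e = true)) P = cc E X P := by
  unfold ePart cc
  rw [Multiset.countP_eq_card_filter, Multiset.filter_filter]
  congr 1
  apply Multiset.filter_congr
  intro e _
  simp [and_comm]

lemma lpcon_iff (E : Multiset (Sym2 V)) (X : Finset V) (m : Finset V → ℝ) :
    LPCOn E X m ↔ ∀ P, IsPartitionOf X P → ((∑ A ∈ P, m A) - m X ≤ (cc E X P : ℝ)) := by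
  unfold LPCOn
  constructor <;> intro h P hP <;> have h2 := h P hP
  · rwa [ePart_eq_cc, ge_iff_le] at h2
  · rw [ePart_eq_cc]; exact h2

lemma countP_eq_add_sum {α β : Type*} (E : Multiset α) (p q : α → Prop)
    [DecidablePred p] [DecidablePred q] (F : Finset β) (r : β → α → Prop)
    [∀ b, DecidablePred (r b)]
    (h : ∀ e ∈ E, (if p e then (1:ℕ) else 0) = (if q e then 1 else 0) + ∑ b ∈ F, if r b e then 1 else 0) :
    Multiset.countP p E = Multiset.countP q E + ∑ b ∈ F, Multiset.countP (r b) E := by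
  induction E using Multiset.induction_on with
  | empty => simp
  | cons a s ih =>
    have ha := h a (Multiset.mem_cons_self a s)
    have ih' := ih (fun e he => h e (Multiset.mem_cons_of_mem he))
    simp only [Multiset.countP_cons, Finset.sum_add_distrib, ih', ha]
    ring

lemma countP_add_le {α : Type*} (E : Multiset α) (p q r : α → Prop)
    [DecidablePred p] [DecidablePred q] [DecidablePred r]
    (h : ∀ e ∈ E, (if q e then (1:ℕ) else 0) + (if r e then 1 else 0) ≤ if p e then 1 else 0) :
    Multiset.countP q E + Multiset.countP r E ≤ Multiset.countP p E := by
  induction E using Multiset.induction_on with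
  | empty => simp
  | cons a s ih =>
    have ha := h a (Multiset.mem_cons_self a s)
    have ih' := ih (fun e he => h e (Multiset.mem_cons_of_mem he))
    simp only [Multiset.countP_cons]
    omega

lemma part_subset {W : Finset V} {P : Finset (Finset V)} (hP : IsPartitionOf W P)
    {A : Finset V} (hA : A ∈ P) : A ⊆ W := by
  have h := Finset.le_sup (f := id) hA
  rw [hP.2.2] at h
  exact h

lemma part_exists {W : Finset V} {P : Finset (Finset V)} (hP : IsPartitionOf W P)
    {v : V} (hv : v ∈ W) : ∃ A ∈ P, v ∈ A := by
  rw [← hP.2.2] at hv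
  exact Finset.mem_sup.mp hv

lemma part_unique {W : Finset V} {P : Finset (Finset V)} (hP : IsPartitionOf W P)
    {A B : Finset V} (hA : A ∈ P) (hB : B ∈ P)
    {v : V} (hvA : v ∈ A) (hvB : v ∈ B) : A = B := by
  by_contra hne
  exact (Finset.disjoint_left.mp (hP.2.1 A hA B hB hne) hvA) hvB

lemma cc_self_zero (E : Multiset (Sym2 V)) (B : Finset V) : cc E B {B} = 0 := by
  unfold cc
  rw [Multiset.countP_eq_zero]
  rintro e _ ⟨h1, h2⟩
  rw [h2 B (Finset.mem_singleton_self B)] at h1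
  exact Bool.false_ne_true h1

lemma bothB_empty (e : Sym2 V) : bothB (∅ : Finset V) e = false := by
  induction e using Sym2.inductionOn with
  | hf a b => simp [bothB]

lemma cc_empty_zero (E : Multiset (Sym2 V)) (P : Finset (Finset V)) :
    cc E (∅ : Finset V) P = 0 := by
  unfold cc
  rw [Multiset.countP_eq_zero]
  rintro e _ ⟨h1, -⟩
  rw [bothB_empty] at h1
  exact Bool.false_ne_true h1

lemma cc_decomp (E : Multiset (Sym2 V)) {W : Finset V} {S R : Finset (Finset V)}
    (hS : IsPartitionOf W S) (hR : IsPartitionOf W R)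
    (href : ∀ B ∈ S, ∃ C ∈ R, B ⊆ C) :
    cc E W S = cc E W R + ∑ C ∈ R, cc E C (S.filter (· ⊆ C)) := by
  unfold cc
  apply countP_eq_add_sum
  intro e _
  induction e using Sym2.inductionOn with
  | hf a b =>
    simp only [bothB_true_iff, bothB_false_iff]
    by_cases hW : a ∈ W ∧ b ∈ W
    · by_cases hcr : ∀ C ∈ R, ¬(a ∈ C ∧ b ∈ C)
      · have hLS : ∀ B ∈ S, ¬(a ∈ B ∧ b ∈ B) := by
          intro B hB hab
          obtain ⟨C, hC, hBC⟩ := href B hB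
          exact hcr C hC ⟨hBC hab.1, hBC hab.2⟩
        rw [if_pos ⟨hW, hLS⟩, if_pos ⟨hW, hcr⟩, Finset.sum_eq_zero, add_zero]
        intro C hC
        rw [if_neg]
        rintro ⟨hab, -⟩
        exact hcr C hC hab
      · push_neg at hcr
        obtain ⟨C₀, hC₀, ha0, hb0⟩ := hcr
        have hsum : (∑ C ∈ R, if (a ∈ C ∧ b ∈ C) ∧ ∀ A ∈ S.filter (· ⊆ C), ¬(a ∈ A ∧ b ∈ A) then (1:ℕ) else 0)
            = if (a ∈ C₀ ∧ b ∈ C₀) ∧ ∀ A ∈ S.filter (· ⊆ C₀), ¬(a ∈ A ∧ b ∈ A) then 1 else 0 := by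
          apply Finset.sum_eq_single_of_mem C₀ hC₀
          intro C hC hne
          rw [if_neg]
          rintro ⟨⟨ha, hb⟩, -⟩
          exact hne (part_unique hR hC hC₀ ha ha0)
        have hnR : ¬((a ∈ W ∧ b ∈ W) ∧ ∀ A ∈ R, ¬(a ∈ A ∧ b ∈ A)) := by
          rintro ⟨-, h2⟩; exact h2 C₀ hC₀ ⟨ha0, hb0⟩
        rw [hsum, if_neg hnR, zero_add]
        have hiff : ((a ∈ W ∧ b ∈ W) ∧ ∀ A ∈ S, ¬(a ∈ A ∧ b ∈ A)) ↔
            ((a ∈ C₀ ∧ b ∈ C₀) ∧ ∀ A ∈ S.filter (· ⊆ C₀), ¬(a ∈ A ∧ b ∈ A)) := by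
          constructor
          · rintro ⟨-, h2⟩
            exact ⟨⟨ha0, hb0⟩, fun A hA => h2 A (Finset.mem_filter.mp hA).1⟩
          · rintro ⟨-, h2⟩
            refine ⟨hW, fun B hB hab => ?_⟩
            obtain ⟨C, hC, hBC⟩ := href B hB
            have hCeq : C = C₀ := part_unique hR hC hC₀ (hBC hab.1) ha0
            exact h2 B (Finset.mem_filter.mpr ⟨hB, hCeq ▸ hBC⟩) hab
        by_cases hl : (a ∈ W ∧ b ∈ W) ∧ ∀ A ∈ S, ¬(a ∈ A ∧ b ∈ A)
        · rw [if_pos hl, if_pos (hiff.mp hl)]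
        · rw [if_neg hl, if_neg (fun hc => hl (hiff.mpr hc))]
    · have hnS : ¬((a ∈ W ∧ b ∈ W) ∧ ∀ A ∈ S, ¬(a ∈ A ∧ b ∈ A)) := by
        rintro ⟨h, -⟩; exact hW h
      have hnR : ¬((a ∈ W ∧ b ∈ W) ∧ ∀ A ∈ R, ¬(a ∈ A ∧ b ∈ A)) := by
        rintro ⟨h, -⟩; exact hW h
      rw [if_neg hnS, if_neg hnR, Finset.sum_eq_zero, add_zero]
      intro C hC
      rw [if_neg]
      rintro ⟨hab, -⟩
      exact hW ⟨part_subset hR hC hab.1, part_subset hR hC hab.2⟩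

lemma sum_regroup {W : Finset V} {S R : Finset (Finset V)}
    (hS : IsPartitionOf W S) (hR : IsPartitionOf W R)
    (href : ∀ B ∈ S, ∃ C ∈ R, B ⊆ C) (g : Finset V → ℝ) :
    ∑ C ∈ R, ∑ B ∈ S.filter (· ⊆ C), g B = ∑ B ∈ S, g B := by
  rw [← Finset.sum_biUnion]
  · congr 1
    ext B
    simp only [Finset.mem_biUnion, Finset.mem_filter]
    constructor
    · rintro ⟨C, hC, hB, -⟩; exact hB
    · intro hB
      obtain ⟨C, hC, hBC⟩ := href B hB
      exact ⟨C, hC, hB, hBC⟩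
  · intro C hC C' hC' hne
    apply Finset.disjoint_left.mpr
    intro B hB hB'
    rw [Finset.mem_coe] at hC hC'
    rw [Finset.mem_filter] at hB hB'
    obtain ⟨v, hv⟩ := hS.1 B hB.1
    exact hne (part_unique hR hC hC' (hB.2 hv) (hB'.2 hv))

lemma filter_sup_eq {W : Finset V} {S R : Finset (Finset V)}
    (hS : IsPartitionOf W S) (hR : IsPartitionOf W R)
    (href : ∀ B ∈ S, ∃ C ∈ R, B ⊆ C) {C : Finset V} (hC : C ∈ R) :
    (S.filter (· ⊆ C)).sup id = C := by
  apply le_antisymm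
  · exact Finset.sup_le fun B hB => (Finset.mem_filter.mp hB).2
  · intro v hv
    have hvW : v ∈ W := part_subset hR hC hv
    obtain ⟨B, hB, hvB⟩ := part_exists hS hvW
    obtain ⟨C', hC', hBC'⟩ := href B hB
    have hCC : C' = C := part_unique hR hC' hC (hBC' hvB) hv
    exact (Finset.le_sup (f := id) (Finset.mem_filter.mpr ⟨hB, hCC ▸ hBC'⟩) : B ⊆ _) hvB

lemma chain_ineq (m : Finset V → ℝ) (hm : IntersectingSupermodular m) (B : Finset V)
    (T : Finset (Finset V)) (hdisj : ∀ C ∈ T, ∀ C' ∈ T, C ≠ C' → Disjoint C C')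
    (hmeet : ∀ C ∈ T, (B ∩ C).Nonempty) :
    m B + ∑ C ∈ T, m C ≤ (∑ C ∈ T, m (B ∩ C)) + m (B ∪ T.sup id) := by
  induction T using Finset.induction_on with
  | empty => simp
  | @insert C T hCT ih =>
    have hdisj' : ∀ x ∈ T, ∀ y ∈ T, x ≠ y → Disjoint x y := fun x hx y hy =>
      hdisj x (Finset.mem_insert_of_mem hx) y (Finset.mem_insert_of_mem hy)
    have hmeet' : ∀ x ∈ T, (B ∩ x).Nonempty := fun x hx => hmeet x (Finset.mem_insert_of_mem hx)
    have ih' := ih hdisj' hmeet'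
    have hCdisj : Disjoint C (T.sup id) := by
      rw [Finset.disjoint_sup_right]
      intro C' hC'
      exact hdisj C (Finset.mem_insert_self _ _) C' (Finset.mem_insert_of_mem hC')
        (fun h => hCT (h ▸ hC'))
    have hX : ((B ∪ T.sup id) ∩ C) = B ∩ C := by
      rw [Finset.union_inter_distrib_right]
      have h0 : T.sup id ∩ C = ∅ := by
        rw [Finset.inter_comm]
        exact Finset.disjoint_iff_inter_eq_empty.mp hCdisj
      rw [h0, Finset.union_empty]
    have hne : ((B ∪ T.sup id) ∩ C).Nonempty := by
      rw [hX]; exact hmeet C (Finset.mem_insert_self _ _)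
    have hsm2 := hm (B ∪ T.sup id) C hne
    rw [hX] at hsm2
    rw [Finset.sum_insert hCT, Finset.sum_insert hCT, Finset.sup_insert]
    have hu : B ∪ (id C ⊔ T.sup id) = (B ∪ T.sup id) ∪ C := by
      rw [Finset.sup_eq_union]
      ext v
      simp only [Finset.mem_union, id]
      tauto
    rw [hu]
    linarith

lemma merge_partition {W : Finset V} {R T : Finset (Finset V)} (hR : IsPartitionOf W R)
    (hT : T ⊆ R) (hTne : T.Nonempty) :
    IsPartitionOf W ((R \ T) ∪ {T.sup id}) ∧ T.sup id ∉ R \ T := by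
  obtain ⟨C₁, hC₁⟩ := hTne
  have hC₁sub : C₁ ⊆ T.sup id := Finset.le_sup (f := id) hC₁
  have hC₁ne : C₁.Nonempty := hR.1 C₁ (hT hC₁)
  have hnot : T.sup id ∉ R \ T := by
    intro hmem
    rw [Finset.mem_sdiff] at hmem
    have hne : T.sup id ≠ C₁ := fun h => hmem.2 (h ▸ hC₁)
    have hd := hR.2.1 _ hmem.1 C₁ (hT hC₁) hne
    obtain ⟨v, hv⟩ := hC₁ne
    exact Finset.disjoint_left.mp hd (hC₁sub hv) hv
  refine ⟨⟨?_, ?_, ?_⟩, hnot⟩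
  · intro A hA
    rcases Finset.mem_union.mp hA with h | h
    · exact hR.1 A (Finset.mem_sdiff.mp h).1
    · rw [Finset.mem_singleton.mp h]
      exact hC₁ne.mono hC₁sub
  · intro A hA B hB hne
    rcases Finset.mem_union.mp hA with h1 | h1 <;> rcases Finset.mem_union.mp hB with h2 | h2
    · exact hR.2.1 A (Finset.mem_sdiff.mp h1).1 B (Finset.mem_sdiff.mp h2).1 hne
    · rw [Finset.mem_singleton.mp h2, Finset.disjoint_sup_right]
      intro C hC
      exact hR.2.1 A (Finset.mem_sdiff.mp h1).1 C (hT hC)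
        (fun h => (Finset.mem_sdiff.mp h1).2 (h ▸ hC))
    · rw [Finset.mem_singleton.mp h1]
      have hd : Disjoint B (T.sup id) := by
        rw [Finset.disjoint_sup_right]
        intro C hC
        exact hR.2.1 B (Finset.mem_sdiff.mp h2).1 C (hT hC)
          (fun h => (Finset.mem_sdiff.mp h2).2 (h ▸ hC))
      exact hd.symm
    · exact absurd ((Finset.mem_singleton.mp h1).trans (Finset.mem_singleton.mp h2).symm) hne
  · rw [Finset.sup_union, Finset.sup_singleton]
    simp only [id_eq]
    rw [← Finset.sup_union, Finset.sdiff_union_of_subset hT]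
    exact hR.2.2

lemma lpcon_of_scaled {E : Multiset (Sym2 V)} {X : Finset V} {l : Finset V → ℝ} {k : ℝ}
    (hk : 1 ≤ k) (h : LPCOn E X (fun A => k * l A)) : LPCOn E X l := by
  intro P hP
  have h1 := h P hP
  set c := (ePart (E.filter fun e => bothB X e = true) P : ℝ) with hc
  have hc0 : (0:ℝ) ≤ c := Nat.cast_nonneg _
  have hx : (∑ A ∈ P, k * l A) - k * l X = k * ((∑ A ∈ P, l A) - l X) := by
    rw [← Finset.mul_sum]; ring
  rw [hx] at h1
  rcases le_or_gt 0 ((∑ A ∈ P, l A) - l X) with h2 | h2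
  · have h3 := le_mul_of_one_le_left h2 hk
    have h4 : k * ((∑ A ∈ P, l A) - l X) ≤ c := h1
    rw [ge_iff_le]
    linarith
  · rw [ge_iff_le]
    linarith

lemma supermodular_scale {l : Finset V → ℝ} (hsm : IntersectingSupermodular l) {k : ℝ}
    (hk : 0 ≤ k) : IntersectingSupermodular (fun A => k * l A) := by
  intro A B hAB
  have h := hsm A B hAB
  simp only [ge_iff_le] at h ⊢
  nlinarith

end Aux

section Master
variable {V : Type*} [Fintype V] [DecidableEq V]

lemma master_lemma (E : Multiset (Sym2 V)) (m : Finset V → ℝ)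
    (hm : IntersectingSupermodular m) (hm0 : m ∅ = 0)
    (Q : Finset (Finset V)) (hQ : IsPartitionOf Finset.univ Q)
    (hpc : ∀ B ∈ Q, LPCOn E B m)
    (hmax : ∀ B ⊆ Finset.univ, B.Nonempty → LPCOn E B m → ∃ A ∈ Q, B ⊆ A) :
    ∀ n : ℕ, ∀ S ⊆ Q, S.card ≤ n →
      (cc E (S.sup id) S : ℝ) ≤ (∑ B ∈ S, m B) - m (S.sup id) := by
  intro n
  induction n with
  | zero =>
    intro S hSQ hcard
    have hS0 : S = ∅ := Finset.card_eq_zero.mp (Nat.le_zero.mp hcard)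
    subst hS0
    simp [cc_empty_zero, hm0]
  | succ n ih =>
    intro S hSQ hcard
    rcases S.eq_empty_or_nonempty with rfl | hSne
    · simp [cc_empty_zero, hm0]
    by_contra hfail
    push_neg at hfail
    set W := S.sup id with hW
    obtain ⟨B₁, hB₁⟩ := hSne
    have hWne : W.Nonempty := (hQ.1 B₁ (hSQ hB₁)).mono (Finset.le_sup (f := id) hB₁)
    have hSpart : IsPartitionOf W S :=
      ⟨fun B hB => hQ.1 B (hSQ hB), fun A hA B hB h => hQ.2.1 A (hSQ hA) B (hSQ hB) h, rfl⟩
    have hSne' : S.Nonempty := ⟨B₁, hB₁⟩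
    -- W is m-partition-connected
    have hWpc : LPCOn E W m := by
      have inner : ∀ j : ℕ, ∀ R : Finset (Finset V), R.card ≤ j → IsPartitionOf W R →
          (∑ C ∈ R, m C) - (cc E W R : ℝ) ≤ m W := by
        intro j
        induction j with
        | zero =>
          intro R hRc hR
          exfalso
          have hR0 : R = ∅ := Finset.card_eq_zero.mp (Nat.le_zero.mp hRc)
          subst hR0
          have h := hR.2.2
          rw [Finset.sup_empty] at h
          rw [← h] at hWne
          exact Finset.not_nonempty_empty hWne
        | succ j ihj =>
          intro R hRc hR
          by_cases hcase : ∀ B ∈ S, ∃ C ∈ R, B ⊆ C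
          · -- every S-part inside one R-part
            rcases Nat.lt_or_ge R.card 2 with hR1 | hR2
            · -- R is a single part, equal to W
              have hRne : R.Nonempty := by
                rw [Finset.nonempty_iff_ne_empty]
                intro h0
                subst h0
                have h := hR.2.2
                rw [Finset.sup_empty] at h
                rw [← h] at hWne
                exact Finset.not_nonempty_empty hWne
              have hc1 : R.card = 1 := by
                have := Finset.card_pos.mpr hRne
                omega
              obtain ⟨C, rfl⟩ := Finset.card_eq_one.mp hc1
              have hCW : C = W := by
                have h := hR.2.2
                rwa [Finset.sup_singleton] at h
              rw [Finset.sum_singleton]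
              have hcc : (0:ℝ) ≤ (cc E W {C} : ℝ) := Nat.cast_nonneg _
              rw [hCW]
              linarith
            · -- at least two parts: use outer induction on the pieces
              have key : ∀ C ∈ R, (cc E C (S.filter (· ⊆ C)) : ℝ) ≤
                  (∑ B ∈ S.filter (· ⊆ C), m B) - m C := by
                intro C hC
                have hsub : S.filter (· ⊆ C) ⊆ Q := (Finset.filter_subset _ S).trans hSQ
                -- the filter is a proper subset of S
                obtain ⟨C', hC', hCC'⟩ := Finset.exists_mem_ne hR2 C
                obtain ⟨v', hv'⟩ := hR.1 C' hC'
                obtain ⟨B', hB', hvB'⟩ := part_exists hSpart (part_subset hR hC' hv')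
                have hB'nC : ¬ B' ⊆ C := by
                  intro hsubB
                  exact Finset.disjoint_left.mp (hR.2.1 C' hC' C hC hCC') hv' (hsubB hvB')
                have hss : S.filter (· ⊆ C) ⊂ S := by
                  rw [Finset.ssubset_iff_of_subset (Finset.filter_subset _ S)]
                  exact ⟨B', hB', fun hmem => hB'nC (Finset.mem_filter.mp hmem).2⟩
                have hcard' : (S.filter (· ⊆ C)).card ≤ n := by
                  have := Finset.card_lt_card hss
                  omega
                have h := ih _ hsub hcard'
                rwa [filter_sup_eq hSpart hR hcase hC] at h
              have hdec := cc_decomp E hSpart hR hcase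
              have hsum := sum_regroup hSpart hR hcase m
              have h5 : (∑ C ∈ R, (cc E C (S.filter (· ⊆ C)) : ℝ)) ≤
                  ∑ C ∈ R, ((∑ B ∈ S.filter (· ⊆ C), m B) - m C) := Finset.sum_le_sum key
              rw [Finset.sum_sub_distrib] at h5
              have hsum2 : ∑ C ∈ R, ∑ B ∈ S.filter (· ⊆ C), m B = ∑ B ∈ S, m B := hsum
              rw [hsum2] at h5
              have hcast : (cc E W S : ℝ) = (cc E W R : ℝ) +
                  ∑ C ∈ R, (cc E C (S.filter (· ⊆ C)) : ℝ) := by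
                rw [hdec]; push_cast; ring
              linarith
          · -- merging case
            push_neg at hcase
            obtain ⟨B, hBS, hBnc⟩ := hcase
            set T := R.filter (fun C => (B ∩ C).Nonempty) with hTdef
            have hTR : T ⊆ R := Finset.filter_subset _ _
            have hBW : B ⊆ W := part_subset hSpart hBS
            have hBmem : ∀ v ∈ B, ∃ C ∈ T, v ∈ C := by
              intro v hv
              obtain ⟨C, hC, hvC⟩ := part_exists hR (hBW hv)
              refine ⟨C, ?_, hvC⟩
              rw [hTdef, Finset.mem_filter]
              exact ⟨hC, ⟨v, Finset.mem_inter.mpr ⟨hv, hvC⟩⟩⟩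
            have hBsub : B ⊆ T.sup id := by
              intro v hv
              obtain ⟨C, hCT, hvC⟩ := hBmem v hv
              exact (Finset.le_sup (f := id) hCT : C ⊆ _) hvC
            have hTne : T.Nonempty := by
              obtain ⟨v, hv⟩ := hSpart.1 B hBS
              obtain ⟨C, hCT, _⟩ := hBmem v hv
              exact ⟨C, hCT⟩
            have hT2 : 2 ≤ T.card := by
              by_contra hlt
              push_neg at hlt
              have hc1 : T.card = 1 := by
                have := Finset.card_pos.mpr hTne
                omega
              obtain ⟨C₁, hTc⟩ := Finset.card_eq_one.mp hc1
              have hBC₁ : B ⊆ C₁ := by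
                have := hBsub
                rw [hTc, Finset.sup_singleton] at this
                exact this
              exact hBnc C₁ (hTR (hTc ▸ Finset.mem_singleton_self C₁)) hBC₁
            obtain ⟨hR'part, hCsnot⟩ := merge_partition hR hTR hTne
            set Cs := T.sup id with hCs
            set R' := (R \ T) ∪ {Cs} with hR'def
            have hR'card : R'.card ≤ j := by
              have h1 : R'.card ≤ (R \ T).card + 1 := by
                rw [hR'def]
                exact le_trans (Finset.card_union_le _ _) (by simp)
              have h2 : (R \ T).card = R.card - T.card := Finset.card_sdiff_of_subset hTR
              have h3 : T.card ≤ R.card := Finset.card_le_card hTR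
              omega
            have hinner := ihj R' hR'card hR'part
            set PB := T.image (fun C => B ∩ C) with hPBdef
            have hTmeet : ∀ C ∈ T, (B ∩ C).Nonempty := by
              intro C hC
              rw [hTdef, Finset.mem_filter] at hC
              exact hC.2
            have hinj : ∀ x ∈ T, ∀ y ∈ T, B ∩ x = B ∩ y → x = y := by
              intro x hx y hy hxy
              by_contra hne
              have hd := hR.2.1 x (hTR hx) y (hTR hy) hne
              obtain ⟨v, hv⟩ := hTmeet x hx
              have hv' : v ∈ B ∩ y := hxy ▸ hv
              exact Finset.disjoint_left.mp hd (Finset.mem_inter.mp hv).2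
                (Finset.mem_inter.mp hv').2
            have hPBpart : IsPartitionOf B PB := by
              refine ⟨?_, ?_, ?_⟩
              · intro D hD
                obtain ⟨C, hCT, rfl⟩ := Finset.mem_image.mp hD
                exact hTmeet C hCT
              · intro D hD D' hD' hne
                obtain ⟨C, hCT, rfl⟩ := Finset.mem_image.mp hD
                obtain ⟨C', hC'T, rfl⟩ := Finset.mem_image.mp hD'
                have hCC' : C ≠ C' := fun h => hne (by rw [h])
                exact Finset.disjoint_left.mpr fun v hv hv' =>
                  Finset.disjoint_left.mp (hR.2.1 C (hTR hCT) C' (hTR hC'T) hCC')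
                    (Finset.mem_inter.mp hv).2 (Finset.mem_inter.mp hv').2
              · apply le_antisymm
                · exact Finset.sup_le fun D hD => by
                    obtain ⟨C, hCT, rfl⟩ := Finset.mem_image.mp hD
                    exact Finset.inter_subset_left
                · intro v hv
                  obtain ⟨C, hCT, hvC⟩ := hBmem v hv
                  exact (Finset.le_sup (f := id) (Finset.mem_image_of_mem _ hCT) :
                    B ∩ C ⊆ _) (Finset.mem_inter.mpr ⟨hv, hvC⟩)
            have hBpc := (lpcon_iff E B m).mp (hpc B (hSQ hBS)) PB hPBpart
            have hsumPB : ∑ D ∈ PB, m D = ∑ C ∈ T, m (B ∩ C) := Finset.sum_image hinj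
            rw [hsumPB] at hBpc
            -- counting: cc E W R' + cc E B PB ≤ cc E W R
            have hpw : ∀ e ∈ E,
                (if bothB W e = true ∧ ∀ A ∈ R', bothB A e = false then (1:ℕ) else 0) +
                (if bothB B e = true ∧ ∀ A ∈ PB, bothB A e = false then 1 else 0) ≤
                (if bothB W e = true ∧ ∀ A ∈ R, bothB A e = false then 1 else 0) := by
              intro e _
              induction e using Sym2.inductionOn with
              | hf a b =>
                simp only [bothB_true_iff, bothB_false_iff]
                have hCsR' : Cs ∈ R' := by
                  rw [hR'def]
                  exact Finset.mem_union_right _ (Finset.mem_singleton_self _)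
                by_cases h1 : (a ∈ W ∧ b ∈ W) ∧ ∀ A ∈ R', ¬(a ∈ A ∧ b ∈ A)
                · have hPB0 : ¬((a ∈ B ∧ b ∈ B) ∧ ∀ A ∈ PB, ¬(a ∈ A ∧ b ∈ A)) := by
                    rintro ⟨hab, -⟩
                    exact h1.2 Cs hCsR' ⟨hBsub hab.1, hBsub hab.2⟩
                  have hcross : ∀ C ∈ R, ¬(a ∈ C ∧ b ∈ C) := by
                    intro C hC hab
                    by_cases hCT : C ∈ T
                    · exact h1.2 Cs hCsR'
                        ⟨(Finset.le_sup (f := id) hCT : C ⊆ _) hab.1,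
                         (Finset.le_sup (f := id) hCT : C ⊆ _) hab.2⟩
                    · refine h1.2 C ?_ hab
                      rw [hR'def]
                      exact Finset.mem_union_left _ (Finset.mem_sdiff.mpr ⟨hC, hCT⟩)
                  rw [if_pos h1, if_neg hPB0, if_pos ⟨h1.1, hcross⟩]
                · rw [if_neg h1, zero_add]
                  by_cases h2 : (a ∈ B ∧ b ∈ B) ∧ ∀ A ∈ PB, ¬(a ∈ A ∧ b ∈ A)
                  · have hcross : ∀ C ∈ R, ¬(a ∈ C ∧ b ∈ C) := by
                      intro C hC hab
                      have hCT : C ∈ T := by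
                        rw [hTdef, Finset.mem_filter]
                        exact ⟨hC, ⟨a, Finset.mem_inter.mpr ⟨h2.1.1, hab.1⟩⟩⟩
                      exact h2.2 (B ∩ C) (by rw [hPBdef]; exact Finset.mem_image_of_mem _ hCT)
                        ⟨Finset.mem_inter.mpr ⟨h2.1.1, hab.1⟩, Finset.mem_inter.mpr ⟨h2.1.2, hab.2⟩⟩
                    rw [if_pos h2, if_pos ⟨⟨hBW h2.1.1, hBW h2.1.2⟩, hcross⟩]
                  · rw [if_neg h2]
                    exact Nat.zero_le _
            have hcnt : cc E W R' + cc E B PB ≤ cc E W R := by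
              unfold cc
              exact countP_add_le E _ _ _ hpw
            have hcast : (cc E W R' : ℝ) + (cc E B PB : ℝ) ≤ (cc E W R : ℝ) := by
              exact_mod_cast hcnt
            -- supermodular chain
            have hchain := chain_ineq m hm B T
              (fun x hx y hy hne => hR.2.1 x (hTR hx) y (hTR hy) hne) hTmeet
            have hun : B ∪ T.sup id = T.sup id := Finset.union_eq_right.mpr hBsub
            rw [hun] at hchain
            -- sums
            have hsR : ∑ C ∈ R, m C = (∑ C ∈ R \ T, m C) + ∑ C ∈ T, m C :=
              (Finset.sum_sdiff hTR).symm
            have hsR' : ∑ C ∈ R', m C = (∑ C ∈ R \ T, m C) + m Cs := by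
              rw [hR'def, Finset.sum_union (Finset.disjoint_singleton_right.mpr hCsnot),
                Finset.sum_singleton]
            linarith
      intro R hR
      rw [ge_iff_le, ePart_eq_cc]
      have h := inner R.card R le_rfl hR
      linarith
    obtain ⟨B₀, hB₀Q, hWB₀⟩ := hmax W (Finset.subset_univ W) hWne hWpc
    have hall : ∀ B ∈ S, B = B₀ := by
      intro B hB
      by_contra hne
      have hd := hQ.2.1 B (hSQ hB) B₀ hB₀Q hne
      obtain ⟨v, hv⟩ := hQ.1 B (hSQ hB)
      exact Finset.disjoint_left.mp hd hv (hWB₀ ((Finset.le_sup (f := id) hB : B ⊆ W) hv))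
    have hSsing : S = {B₀} :=
      Finset.eq_singleton_iff_nonempty_unique_mem.mpr ⟨hSne', hall⟩
    have hWB : W = B₀ := by
      rw [hW, hSsing, Finset.sup_singleton]
      rfl
    rw [hSsing, hWB] at hfail
    rw [Finset.sum_singleton, cc_self_zero] at hfail
    simp at hfail

end Master

theorem stmt15 {V : Type*} [Fintype V] [DecidableEq V] (G : MGraph V)
    (l : Finset V → ℝ) (hl0 : l ∅ = 0) (hsm : IntersectingSupermodular l)
    (k : ℝ) (hk : 1 ≤ k) :
    ∀ P Q : Finset (Finset V),
      IsLPCComponents G.edges Finset.univ l P →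
      IsLPCComponents G.edges Finset.univ (fun A => k * l A) Q →
      ThetaVal G.edges Finset.univ l P ≤
        (1 / k) * ThetaVal G.edges Finset.univ (fun A => k * l A) Q := by
  intro P Q hP hQ
  have hk0 : (0:ℝ) < k := lt_of_lt_of_le one_pos hk
  obtain ⟨hPpart, hPpc, hPmax⟩ := hP
  obtain ⟨hQpart, hQpc, hQmax⟩ := hQ
  have hmsm : IntersectingSupermodular (fun A : Finset V => k * l A) :=
    supermodular_scale hsm (le_of_lt hk0)
  have hm0 : (fun A : Finset V => k * l A) ∅ = 0 := by simp [hl0]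
  have href : ∀ B ∈ Q, ∃ A ∈ P, B ⊆ A := fun B hB =>
    hPmax B (Finset.subset_univ B) (hQpart.1 B hB) (lpcon_of_scaled hk (hQpc B hB))
  have hmaster := master_lemma G.edges (fun A => k * l A) hmsm hm0 Q hQpart hQpc hQmax
  have hkey : ∀ A ∈ P, (cc G.edges A (Q.filter (· ⊆ A)) : ℝ) ≤
      (∑ B ∈ Q.filter (· ⊆ A), k * l B) - k * l A := by
    intro A hA
    have hsub : Q.filter (· ⊆ A) ⊆ Q := Finset.filter_subset _ _
    have h := hmaster (Q.filter (· ⊆ A)).card _ hsub le_rfl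
    rwa [filter_sup_eq hQpart hPpart href hA] at h
  have hdec := cc_decomp G.edges hQpart hPpart href
  -- per-part summed bound
  have hsumkey : (∑ A ∈ P, k * l A) ≤ (∑ B ∈ Q, k * l B) -
      ∑ A ∈ P, (cc G.edges A (Q.filter (· ⊆ A)) : ℝ) := by
    have h1 : ∑ A ∈ P, ((cc G.edges A (Q.filter (· ⊆ A)) : ℝ) + k * l A) ≤
        ∑ A ∈ P, ∑ B ∈ Q.filter (· ⊆ A), k * l B := by
      apply Finset.sum_le_sum
      intro A hA
      linarith [hkey A hA]
    rw [sum_regroup hQpart hPpart href (fun B => k * l B)] at h1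
    rw [Finset.sum_add_distrib] at h1
    linarith
  have hdecR : (cc G.edges Finset.univ Q : ℝ) = (cc G.edges Finset.univ P : ℝ) +
      ∑ A ∈ P, (cc G.edges A (Q.filter (· ⊆ A)) : ℝ) := by
    rw [hdec]; push_cast; ring
  have hcP : (0:ℝ) ≤ (cc G.edges Finset.univ P : ℝ) := Nat.cast_nonneg _
  have hextra : 0 ≤ (k - 1) * (cc G.edges Finset.univ P : ℝ) :=
    mul_nonneg (by linarith) hcP
  unfold ThetaVal
  rw [ePart_eq_cc, ePart_eq_cc]
  rw [one_div, inv_mul_eq_div, le_div_iff₀ hk0]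
  have hmul : (∑ A ∈ P, k * l A) = k * ∑ A ∈ P, l A := by rw [Finset.mul_sum]
  rw [hmul] at hsumkey
  nlinarith [hsumkey, hdecR, hextra]
end

section
/- If G is a complete graph on n vertices with 3k ≤ n, and n < 8k − 4, then G admits a bipartite connected spanning subgraph whose vertex degrees all lie in {k, 2k, 3k, 4k}. -/
open Finset

open Paper

theorem build_blowup {V : Type*} [Fintype V] [DecidableEq V] (k s0 s1 s2 s3 s4 : ℕ)
    (hsum : s0 + s1 + s2 + s3 + s4 = Fintype.card V)
    (h0 : 0 < s0) (h1 : 0 < s1)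
    (h23 : 0 < s3 → 0 < s2) (h34 : 0 < s4 → 0 < s3)
    (d0 : s1 ∈ ({k, 2 * k, 3 * k, 4 * k} : Set ℕ))
    (d1 : s0 + s2 ∈ ({k, 2 * k, 3 * k, 4 * k} : Set ℕ))
    (d2 : 0 < s2 → s1 + s3 ∈ ({k, 2 * k, 3 * k, 4 * k} : Set ℕ))
    (d3 : 0 < s3 → s2 + s4 ∈ ({k, 2 * k, 3 * k, 4 * k} : Set ℕ))
    (d4 : 0 < s4 → s3 ∈ ({k, 2 * k, 3 * k, 4 * k} : Set ℕ)) :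
    ∃ H : SimpleGraph V, H ≤ (⊤ : SimpleGraph V) ∧ H.Colorable 2 ∧ H.Connected ∧
      ∀ v : V, degSG H v ∈ ({k, 2 * k, 3 * k, 4 * k} : Set ℕ) := by
  classical
  obtain ⟨B0, hB0sub, hB0⟩ := Finset.exists_subset_card_eq (s := (univ : Finset V)) (n := s0)
    (by rw [card_univ]; omega)
  obtain ⟨B1, hB1sub, hB1⟩ := Finset.exists_subset_card_eq (s := univ \ B0) (n := s1)
    (by rw [card_sdiff_of_subset (subset_univ _), card_univ, hB0]; omega)
  obtain ⟨B2, hB2sub, hB2⟩ := Finset.exists_subset_card_eq (s := (univ \ B0) \ B1) (n := s2)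
    (by rw [card_sdiff_of_subset hB1sub, card_sdiff_of_subset (subset_univ _), card_univ, hB0, hB1]; omega)
  obtain ⟨B3, hB3sub, hB3⟩ := Finset.exists_subset_card_eq (s := ((univ \ B0) \ B1) \ B2) (n := s3)
    (by rw [card_sdiff_of_subset hB2sub, card_sdiff_of_subset hB1sub, card_sdiff_of_subset (subset_univ _),
        card_univ, hB0, hB1, hB2]; omega)
  set g : V → ℕ := fun v =>
    if v ∈ B0 then 0 else if v ∈ B1 then 1 else if v ∈ B2 then 2 else
      if v ∈ B3 then 3 else 4 with hgdef
  have m0 : ∀ v ∈ B0, g v = 0 := by intro v hv; simp [hgdef, hv]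
  have m1 : ∀ v ∈ B1, g v = 1 := by
    intro v hv
    have h0' : v ∉ B0 := (Finset.mem_sdiff.1 (hB1sub hv)).2
    simp [hgdef, hv, h0']
  have m2 : ∀ v ∈ B2, g v = 2 := by
    intro v hv
    have hm := hB2sub hv
    have h1' : v ∉ B1 := (Finset.mem_sdiff.1 hm).2
    have h0' : v ∉ B0 := (Finset.mem_sdiff.1 (Finset.mem_sdiff.1 hm).1).2
    simp [hgdef, hv, h0', h1']
  have m3 : ∀ v ∈ B3, g v = 3 := by
    intro v hv
    have hm := hB3sub hv
    have h2' : v ∉ B2 := (Finset.mem_sdiff.1 hm).2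
    have h1' : v ∉ B1 := (Finset.mem_sdiff.1 (Finset.mem_sdiff.1 hm).1).2
    have h0' : v ∉ B0 :=
      (Finset.mem_sdiff.1 (Finset.mem_sdiff.1 (Finset.mem_sdiff.1 hm).1).1).2
    simp [hgdef, hv, h0', h1', h2']
  have gle : ∀ v, g v ≤ 4 := by
    intro v; simp only [hgdef]; split_ifs <;> omega
  have hF0 : (univ.filter fun v => g v = 0) = B0 := by
    ext v
    simp only [mem_filter, mem_univ, true_and]
    constructor
    · intro h
      simp only [hgdef] at h
      split_ifs at h with a b c d <;> first | assumption | exact absurd h (by omega)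
    · exact m0 v
  have hF1 : (univ.filter fun v => g v = 1) = B1 := by
    ext v
    simp only [mem_filter, mem_univ, true_and]
    constructor
    · intro h
      simp only [hgdef] at h
      split_ifs at h with a b c d <;> first | assumption | exact absurd h (by omega)
    · exact m1 v
  have hF2 : (univ.filter fun v => g v = 2) = B2 := by
    ext v
    simp only [mem_filter, mem_univ, true_and]
    constructor
    · intro h
      simp only [hgdef] at h
      split_ifs at h with a b c d <;> first | assumption | exact absurd h (by omega)
    · exact m2 v
  have hF3 : (univ.filter fun v => g v = 3) = B3 := by
    ext v
    simp only [mem_filter, mem_univ, true_and]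
    constructor
    · intro h
      simp only [hgdef] at h
      split_ifs at h with a b c d <;> first | assumption | exact absurd h (by omega)
    · exact m3 v
  have hF4 : (univ.filter fun v => g v = 4) = (((univ \ B0) \ B1) \ B2) \ B3 := by
    ext v
    simp only [mem_filter, mem_univ, true_and, mem_sdiff]
    constructor
    · intro h
      simp only [hgdef] at h
      split_ifs at h with a b c d
      all_goals first
        | exact absurd h (by omega)
        | exact ⟨⟨⟨a, b⟩, c⟩, d⟩
        | exact ⟨⟨⟨‹_›, ‹_›⟩, ‹_›⟩, ‹_›⟩
    · rintro ⟨⟨⟨a, b⟩, c⟩, d⟩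
      simp [hgdef, a, b, c, d]
  have cF4 : ((((univ \ B0) \ B1) \ B2) \ B3).card = s4 := by
    rw [card_sdiff_of_subset hB3sub, card_sdiff_of_subset hB2sub, card_sdiff_of_subset hB1sub,
      card_sdiff_of_subset (subset_univ _), card_univ, hB0, hB1, hB2, hB3]
    omega
  have hF5 : ∀ j, 5 ≤ j → (univ.filter fun v => g v = j) = ∅ := by
    intro j hj
    apply Finset.filter_false_of_mem
    intro v _
    have := gle v
    omega
  set H : SimpleGraph V :=
    ⟨fun u v => g u + 1 = g v ∨ g v + 1 = g u, ⟨fun u v h => h.symm⟩,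
      ⟨fun v h => by omega⟩⟩ with hH
  have adjdef : ∀ u v : V, H.Adj u v ↔ (g u + 1 = g v ∨ g v + 1 = g u) := fun u v => Iff.rfl
  have adj : ∀ u v : V, g u + 1 = g v → H.Adj u v := fun u v h => Or.inl h
  haveI hdec : DecidableRel H.Adj :=
    fun u v => decidable_of_iff _ (adjdef u v).symm
  have hdeg : ∀ w : V, degSG H w =
      (univ.filter fun u => g u = g w + 1).card +
        (univ.filter fun u => g u + 1 = g w).card := by
    intro w
    have hset : H.neighborSet w =
        ↑((univ.filter fun u => g u = g w + 1) ∪ (univ.filter fun u => g u + 1 = g w)) := by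
      ext u
      simp only [SimpleGraph.mem_neighborSet, adjdef, Finset.coe_union, Set.mem_union,
        mem_coe, mem_filter, mem_univ, true_and]
      omega
    rw [degSG, hset, Nat.card_coe_set_eq, Set.ncard_coe_finset, Finset.card_union_of_disjoint]
    rw [Finset.disjoint_left]
    intro u hu1 hu2
    simp only [mem_filter, mem_univ, true_and] at hu1 hu2
    omega
  refine ⟨H, le_top, ?_, ?_, ?_⟩
  · refine ⟨SimpleGraph.Coloring.mk (fun v => (⟨g v % 2, by omega⟩ : Fin 2)) ?_⟩
    intro a b hab
    rw [adjdef] at hab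
    simp only [Ne, Fin.mk.injEq]
    omega
  · have hne : Nonempty V := by
      apply Fintype.card_pos_iff.1
      omega
    obtain ⟨v0, hv0⟩ := Finset.card_pos.1 (by rw [hB0]; exact h0)
    obtain ⟨w1, hw1⟩ := Finset.card_pos.1 (by rw [hB1]; exact h1)
    have gv0 : g v0 = 0 := m0 v0 hv0
    have gw1 : g w1 = 1 := m1 w1 hw1
    rw [SimpleGraph.connected_iff]
    refine ⟨?_, hne⟩
    have reach : ∀ v, H.Reachable v0 v := by
      intro v
      have hv4 := gle v
      have hcase : g v = 0 ∨ g v = 1 ∨ g v = 2 ∨ g v = 3 ∨ g v = 4 := by omega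
      rcases hcase with h | h | h | h | h
      · exact ((adj v0 w1 (by omega)).reachable.trans
          ((adj v w1 (by omega)).reachable.symm))
      · exact (adj v0 v (by omega)).reachable
      · exact (adj v0 w1 (by omega)).reachable.trans (adj w1 v (by omega)).reachable
      · have hs2 : 0 < s2 := by
          apply h23
          rw [← hB3]
          apply Finset.card_pos.2
          refine ⟨v, ?_⟩
          rw [← hF3]
          simp [h]
        obtain ⟨u2, hu2⟩ := Finset.card_pos.1 (by rw [hB2]; exact hs2)
        have gu2 : g u2 = 2 := m2 u2 hu2
        exact ((adj v0 w1 (by omega)).reachable.trans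
          (adj w1 u2 (by omega)).reachable).trans (adj u2 v (by omega)).reachable
      · have hs4 : 0 < s4 := by
          rw [← cF4]
          apply Finset.card_pos.2
          refine ⟨v, ?_⟩
          rw [← hF4]
          simp [h]
        have hs3 : 0 < s3 := h34 hs4
        have hs2 : 0 < s2 := h23 hs3
        obtain ⟨u2, hu2⟩ := Finset.card_pos.1 (by rw [hB2]; exact hs2)
        obtain ⟨u3, hu3⟩ := Finset.card_pos.1 (by rw [hB3]; exact hs3)
        have gu2 : g u2 = 2 := m2 u2 hu2
        have gu3 : g u3 = 3 := m3 u3 hu3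
        exact (((adj v0 w1 (by omega)).reachable.trans
          (adj w1 u2 (by omega)).reachable).trans
          (adj u2 u3 (by omega)).reachable).trans (adj u3 v (by omega)).reachable
    intro u v
    exact (reach u).symm.trans (reach v)
  · intro v
    have hv4 := gle v
    rw [hdeg v]
    have hcase : g v = 0 ∨ g v = 1 ∨ g v = 2 ∨ g v = 3 ∨ g v = 4 := by omega
    rcases hcase with h | h | h | h | h
    · have e2 : (univ.filter fun u => g u + 1 = g v) = ∅ :=
        Finset.filter_false_of_mem (fun u _ => by omega)
      have e1 : (univ.filter fun u => g u = g v + 1) = B1 := by rw [h]; exact hF1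
      rw [e1, e2, hB1]
      simpa using d0
    · have e2 : (univ.filter fun u => g u + 1 = g v) = B0 := by
        rw [← hF0]; ext u; simp only [mem_filter, mem_univ, true_and]; omega
      have e1 : (univ.filter fun u => g u = g v + 1) = B2 := by rw [h]; exact hF2
      rw [e1, e2, hB2, hB0, Nat.add_comm]
      exact d1
    · have hvB2 : v ∈ B2 := by rw [← hF2]; simp [h]
      have hs2 : 0 < s2 := by rw [← hB2]; exact Finset.card_pos.2 ⟨v, hvB2⟩
      have e2 : (univ.filter fun u => g u + 1 = g v) = B1 := by
        rw [← hF1]; ext u; simp only [mem_filter, mem_univ, true_and]; omega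
      have e1 : (univ.filter fun u => g u = g v + 1) = B3 := by rw [h]; exact hF3
      rw [e1, e2, hB3, hB1, Nat.add_comm]
      exact d2 hs2
    · have hvB3 : v ∈ B3 := by rw [← hF3]; simp [h]
      have hs3 : 0 < s3 := by rw [← hB3]; exact Finset.card_pos.2 ⟨v, hvB3⟩
      have e2 : (univ.filter fun u => g u + 1 = g v) = B2 := by
        rw [← hF2]; ext u; simp only [mem_filter, mem_univ, true_and]; omega
      have e1 : (univ.filter fun u => g u = g v + 1) =
          (((univ \ B0) \ B1) \ B2) \ B3 := by rw [h]; exact hF4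
      rw [e1, e2, cF4, hB2, Nat.add_comm]
      exact d3 hs3
    · have hvB4 : v ∈ (((univ \ B0) \ B1) \ B2) \ B3 := by rw [← hF4]; simp [h]
      have hs4 : 0 < s4 := by rw [← cF4]; exact Finset.card_pos.2 ⟨v, hvB4⟩
      have e2 : (univ.filter fun u => g u + 1 = g v) = B3 := by
        rw [← hF3]; ext u; simp only [mem_filter, mem_univ, true_and]; omega
      have e1 : (univ.filter fun u => g u = g v + 1) = ∅ := by
        rw [h]; exact hF5 5 le_rfl
      rw [e1, e2, hB3]
      simpa using d4 hs4

theorem stmt19 {V : Type*} [Fintype V] [DecidableEq V] (k : ℕ) (hk : 0 < k)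
    (hn1 : 3 * k ≤ Fintype.card V) (hn2 : Fintype.card V < 8 * k - 4) :
    ∃ H : SimpleGraph V, H ≤ (⊤ : SimpleGraph V) ∧ H.Colorable 2 ∧ H.Connected ∧
      ∀ v : V, degSG H v ∈ ({k, 2 * k, 3 * k, 4 * k} : Set ℕ) := by
  set n := Fintype.card V with hn
  have mem1 : k ∈ ({k, 2 * k, 3 * k, 4 * k} : Set ℕ) := Set.mem_insert _ _
  have mem2 : 2 * k ∈ ({k, 2 * k, 3 * k, 4 * k} : Set ℕ) :=
    Set.mem_insert_of_mem _ (Set.mem_insert _ _)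
  by_cases h3 : n = 3 * k
  · exact build_blowup k k (2 * k) 0 0 0 (by omega) hk (by omega)
      (fun h => h) (fun h => h)
      mem2 (by simpa using mem1)
      (fun h => absurd h (by omega)) (fun h => absurd h (by omega))
      (fun h => absurd h (by omega))
  by_cases h4 : n = 4 * k
  · exact build_blowup k k (2 * k) k 0 0 (by omega) hk (by omega)
      (fun h => absurd h (by omega)) (fun h => h)
      mem2 (by simpa [two_mul] using mem2) (fun _ => by simpa using mem2)
      (fun h => absurd h (by omega)) (fun h => absurd h (by omega))
  have hp : ∃ p : ℕ, (p = 1 ∨ p = 2 ∨ p = 3) ∧ (p + 2) * k < n ∧ n < (2 * p + 2) * k := by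
    by_cases hlt : n < 4 * k
    · exact ⟨1, by omega, by omega, by omega⟩
    by_cases hlt2 : n < 6 * k
    · exact ⟨2, by omega, by omega, by omega⟩
    · exact ⟨3, by omega, by omega, by omega⟩
  obtain ⟨p, hp123, hplo, hphi⟩ := hp
  rcases hp123 with rfl | rfl | rfl
  · exact build_blowup k (n - 3 * k) k (4 * k - n) k (n - 3 * k)
      (by omega) (by omega) hk (fun _ => by omega) (fun _ => by omega)
      mem1
      (by simp only [Set.mem_insert_iff, Set.mem_singleton_iff]; omega)
      (fun _ => by simpa [two_mul] using mem2)
      (by simp only [Set.mem_insert_iff, Set.mem_singleton_iff]; omega)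
      (fun _ => mem1)
  · exact build_blowup k (n - 4 * k) k (6 * k - n) k (n - 4 * k)
      (by omega) (by omega) hk (fun _ => by omega) (fun _ => by omega)
      mem1
      (by simp only [Set.mem_insert_iff, Set.mem_singleton_iff]; omega)
      (fun _ => by simpa [two_mul] using mem2)
      (by simp only [Set.mem_insert_iff, Set.mem_singleton_iff]; omega)
      (fun _ => mem1)
  · exact build_blowup k (n - 5 * k) k (8 * k - n) k (n - 5 * k)
      (by omega) (by omega) hk (fun _ => by omega) (fun _ => by omega)
      mem1
      (by simp only [Set.mem_insert_iff, Set.mem_singleton_iff]; omega)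
      (fun _ => by simpa [two_mul] using mem2)
      (by simp only [Set.mem_insert_iff, Set.mem_singleton_iff]; omega)
      (fun _ => mem1)
end
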